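/- arXiv:1906.06247 — 3 statements merged into one kernel-verified Lean document; each statement's English description precedes it below -/
import Mathlib

section
/- Let θ be a parameter of a d-layer fully connected ReLU network in which, in each hidden layer i, at least ⌈h_i/2⌉ of the units are set to zero (meaning both the corresponding rows of A_i and the corresponding columns of A_{i+1} are zero). Then for any choice of permutations of the units of the hidden layers, there exists a continuous, piecewise-linear path consisting of 5 line segments from θ to the parameter obtained by permuting the hidden units of θ according to these permutations, along which the loss L(f_{π(t)}) is constant (equal to L(f_θ)) for all t ∈ [0,1]. -/
open scoped BigOperators

noncomputable section

/-- Entrywise ReLU: `φ(z)ₖ = max (z k) 0`. -/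
def relu {n : ℕ} (v : Fin n → ℝ) : Fin n → ℝ := fun k => max (v k) 0

/-- Parameters of a `d`-layer fully connected network with widths `h 0, …, h d`:
`θ i` is the weight matrix `A_{i+1}` mapping layer `i` to layer `i+1`. -/
abbrev Params (h : ℕ → ℕ) (d : ℕ) :=
  (i : Fin d) → Matrix (Fin (h ((i : ℕ) + 1))) (Fin (h (i : ℕ))) ℝ

/-- The function computed by the network: `x¹ = A₁ x`, `xⁱ = Aᵢ φ(xⁱ⁻¹)`. -/
def net (h : ℕ → ℕ) : (d : ℕ) → Params h d → (Fin (h 0) → ℝ) → (Fin (h d) → ℝ)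
  | 0, _, x => x
  | 1, θ, x => (θ ⟨0, Nat.zero_lt_one⟩).mulVec x
  | (d + 2), θ, x =>
      (θ (Fin.last (d + 1))).mulVec
        (relu (net h (d + 1) (fun i => θ i.castSucc) x))

/-- Empirical loss of the network on dataset `S` with pointwise loss `l(y, ŷ)`. -/
def loss (h : ℕ → ℕ) (d N : ℕ)
    (l : (Fin (h d) → ℝ) → (Fin (h d) → ℝ) → ℝ)
    (S : Fin N → (Fin (h 0) → ℝ) × (Fin (h d) → ℝ))
    (θ : Params h d) : ℝ :=
  (∑ a, l (S a).2 (net h d θ (S a).1)) / N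

/-- There is a continuous piecewise linear path with (at most) `k` line segments from `a`
to `b` along which `L` stays `≤ bound`; the path is recorded by its `k+1` vertices and the
bound is required on each segment. -/
def PiecewiseLinearConn {E : Type*} [AddCommGroup E] [Module ℝ E]
    (k : ℕ) (L : E → ℝ) (a b : E) (bound : ℝ) : Prop :=
  ∃ p : Fin (k + 1) → E, p 0 = a ∧ p (Fin.last k) = b ∧
    ∀ (i : Fin k), ∀ s ∈ Set.Icc (0 : ℝ) 1,
      L ((1 - s) • p i.castSucc + s • p i.succ) ≤ bound

/-- In the parameter `θ`, every unit `k ∈ Z (m+1)` of the hidden layer `m+1` is "set to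
zero": the corresponding row of `A_{m+1} = θ m` and the corresponding column of
`A_{m+2} = θ (m+1)` are zero; moreover `Z (m+1)` contains at least `⌈h (m+1) / 2⌉` units. -/
def HalfZeroed (h : ℕ → ℕ) (d : ℕ) (θ : Params h d)
    (Z : (i : ℕ) → Finset (Fin (h i))) : Prop :=
  ∀ (m : ℕ) (hm : m + 1 < d),
    (h (m + 1) + 1) / 2 ≤ (Z (m + 1)).card ∧
    ∀ k ∈ Z (m + 1),
      (∀ k', θ ⟨m, Nat.lt_of_succ_lt hm⟩ k k' = 0) ∧
      (∀ k'', θ ⟨m + 1, hm⟩ k'' k = 0)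

/-- The parameter obtained from `θ` by permuting the units of each layer `i` by `σ i`
(simultaneously permuting the rows of `Aᵢ` and the columns of `Aᵢ₊₁`). -/
def permuteParams (h : ℕ → ℕ) (d : ℕ) (θ : Params h d)
    (σ : (i : ℕ) → Equiv.Perm (Fin (h i))) : Params h d :=
  fun jm k k' => θ jm ((σ ((jm : ℕ) + 1)).symm k) ((σ (jm : ℕ)).symm k')

theorem net_rel (h : ℕ → ℕ) :
    ∀ (d : ℕ) (θ θ' : Params h d)
      (W : (i : ℕ) → Finset (Fin (h i)))
      (c : (i : ℕ) → Fin (h i) → Fin (h i))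
      (α : (i : ℕ) → Fin (h i) → ℝ),
      (∀ i k, 0 ≤ α i k) →
      (∀ k, α 0 k = 1) → (∀ k, c 0 k = k) →
      (∀ m : Fin d, ∀ k, k ∉ W ((m : ℕ) + 1) →
        ∀ v w : Fin (h (m : ℕ)) → ℝ,
          (∀ j, j ∉ W (m : ℕ) → w j = α (m : ℕ) j * v (c (m : ℕ) j)) →
          (θ' m).mulVec w k = α ((m : ℕ) + 1) k * (θ m).mulVec v (c ((m : ℕ) + 1) k)) →
      ∀ x k, k ∉ W d → net h d θ' x k = α d k * net h d θ x (c d k) := by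
  intro d
  induction d with
  | zero =>
    intro θ θ' W c α hα hα0 hc0 H x k hk
    simp [net, hα0, hc0]
  | succ d ih =>
    match d with
    | 0 =>
      intro θ θ' W c α hα hα0 hc0 H x k hk
      have := H ⟨0, Nat.zero_lt_one⟩ k hk x x (by intro j _; rw [hα0, hc0]; ring)
      simpa [net] using this
    | d + 1 =>
      intro θ θ' W c α hα hα0 hc0 H x k hk
      have ihp := ih (fun i => θ i.castSucc) (fun i => θ' i.castSucc) W c α hα hα0 hc0
        (fun m k hk v w hw => H m.castSucc k hk v w hw)
      have hlast := H (Fin.last (d + 1)) k hk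
        (relu (net h (d + 1) (fun i => θ i.castSucc) x))
        (relu (net h (d + 1) (fun i => θ' i.castSucc) x))
        (by
          intro j hj
          have := ihp x j hj
          show relu (net h (d+1) (fun i => θ' i.castSucc) x) j
            = α (d+1) j * relu (net h (d+1) (fun i => θ i.castSucc) x) (c (d+1) j)
          simp only [relu, this]
          rw [mul_max_of_nonneg _ _ (hα (d+1) j), mul_zero])
      simpa [net] using hlast
section Defs
variable (h : ℕ → ℕ) (d : ℕ)

def Hid (i : ℕ) : Prop := 1 ≤ i ∧ i < d

instance (i : ℕ) : Decidable (Hid d i) := inferInstanceAs (Decidable (_ ∧ _))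

variable (Z : (i : ℕ) → Finset (Fin (h i))) (σ : (i : ℕ) → Equiv.Perm (Fin (h i)))
variable (τ : (i : ℕ) → Fin (h i) → Fin (h i))

def Zs (i : ℕ) : Finset (Fin (h i)) := if Hid d i then Z i else ∅

def Lset (i : ℕ) : Finset (Fin (h i)) := (Zs h d Z i)ᶜ

def L1 (i : ℕ) : Finset (Fin (h i)) :=
  (Lset h d Z i).filter (fun k => σ i k ∈ Zs h d Z i)

def L2 (i : ℕ) : Finset (Fin (h i)) :=
  (Lset h d Z i).filter (fun k => σ i k ∉ Zs h d Z i)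

def Timg (i : ℕ) : Finset (Fin (h i)) := (Lset h d Z i).image (τ i)

def Simg (i : ℕ) : Finset (Fin (h i)) := (L2 h d Z σ i).image (σ i)

def SLimg (i : ℕ) : Finset (Fin (h i)) := (Lset h d Z i).image (σ i)

def invτ (i : ℕ) (k : Fin (h i)) : Fin (h i) :=
  if hk : ∃ k₀ ∈ Lset h d Z i, τ i k₀ = k then hk.choose else k

def GoodTau : Prop :=
  ∀ i, (Set.InjOn (τ i) (Lset h d Z i)) ∧
    (Hid d i → ∀ k ∈ Lset h d Z i, τ i k ∈ Zs h d Z i ∧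
      (σ i k ∈ Zs h d Z i → τ i k = σ i k) ∧
      (σ i k ∉ Zs h d Z i → τ i k ∉ (L1 h d Z σ i).image (σ i))) ∧
    (¬ Hid d i → τ i = id)

def r1 (i : ℕ) (k : Fin (h i)) : Fin (h i) :=
  if k ∈ Timg h d Z τ i then invτ h d Z τ i k else k

def eps3 (i : ℕ) (k : Fin (h i)) : ℝ :=
  if Hid d i ∧ k ∈ Lset h d Z i ∧ k ∉ Simg h d Z σ i then 0 else 1

def r3 (i : ℕ) (k : Fin (h i)) : Fin (h i) :=
  if Hid d i ∧ k ∈ Simg h d Z σ i then (σ i).symm k else r1 h d Z τ i k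

variable (θ : Params h d)

def P1 : Params h d := fun m =>
  Matrix.of fun k j => θ m (r1 h d Z τ ((m : ℕ) + 1) k) j

def P2 : Params h d := fun m =>
  Matrix.of fun k j =>
    if j ∈ Timg h d Z τ (m : ℕ) then
      θ m (r1 h d Z τ ((m : ℕ) + 1) k) (invτ h d Z τ (m : ℕ) j) else 0

def P3 : Params h d := fun m =>
  Matrix.of fun k j =>
    eps3 h d Z σ ((m : ℕ) + 1) k *
      (if j ∈ Timg h d Z τ (m : ℕ) then
        θ m (r3 h d Z σ τ ((m : ℕ) + 1) k) (invτ h d Z τ (m : ℕ) j) else 0)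

def P4 : Params h d := fun m =>
  Matrix.of fun k j =>
    eps3 h d Z σ ((m : ℕ) + 1) k *
      (if j ∈ SLimg h d Z σ (m : ℕ) then
        θ m (r3 h d Z σ τ ((m : ℕ) + 1) k) ((σ (m : ℕ)).symm j) else 0)

def c1 (i : ℕ) (k : Fin (h i)) : Fin (h i) :=
  if k ∈ Zs h d Z i ∧ k ∈ Timg h d Z τ i then invτ h d Z τ i k else k

def a1 (s : ℝ) (i : ℕ) (k : Fin (h i)) : ℝ :=
  if k ∈ Zs h d Z i then (if k ∈ Timg h d Z τ i then s else 0) else 1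

def a2 (i : ℕ) (k : Fin (h i)) : ℝ :=
  if k ∈ Zs h d Z i then (if k ∈ Timg h d Z τ i then 1 else 0) else 1

def W3 (i : ℕ) : Finset (Fin (h i)) := if Hid d i then (Zs h d Z i)ᶜ else ∅

def c4 (i : ℕ) (k : Fin (h i)) : Fin (h i) :=
  if Hid d i ∧ k ∈ Simg h d Z σ i then (σ i).symm k else c1 h d Z τ i k

def a4 (i : ℕ) (k : Fin (h i)) : ℝ :=
  if Hid d i then
    (if k ∈ Simg h d Z σ i ∨ (k ∈ Zs h d Z i ∧ k ∈ Timg h d Z τ i) then 1 else 0)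
  else 1

def W5 (i : ℕ) : Finset (Fin (h i)) :=
  if Hid d i then (L2 h d Z σ i).image (τ i) else ∅

def c5 (i : ℕ) (k : Fin (h i)) : Fin (h i) :=
  if Hid d i ∧ k ∈ SLimg h d Z σ i then (σ i).symm k else k

def a5 (i : ℕ) (k : Fin (h i)) : ℝ :=
  if Hid d i then (if k ∈ SLimg h d Z σ i then 1 else 0) else 1

end Defs
section Lems
variable {h : ℕ → ℕ} {d : ℕ} {Z : (i : ℕ) → Finset (Fin (h i))}
variable {σ : (i : ℕ) → Equiv.Perm (Fin (h i))}
variable {τ : (i : ℕ) → Fin (h i) → Fin (h i)}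

lemma Zs_of_hid {i : ℕ} (hi : Hid d i) : Zs h d Z i = Z i := if_pos hi

lemma Zs_of_nonhid {i : ℕ} (hi : ¬ Hid d i) : Zs h d Z i = ∅ := if_neg hi

lemma Lset_of_nonhid {i : ℕ} (hi : ¬ Hid d i) : Lset h d Z i = Finset.univ := by
  simp [Lset, Zs_of_nonhid hi]

lemma mem_Lset {i : ℕ} {k : Fin (h i)} : k ∈ Lset h d Z i ↔ k ∉ Zs h d Z i := by
  simp [Lset]

lemma tau_of_nonhid (hτ : GoodTau h d Z σ τ) {i : ℕ} (hi : ¬ Hid d i) :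
    τ i = id := (hτ i).2.2 hi

lemma Timg_of_nonhid (hτ : GoodTau h d Z σ τ) {i : ℕ} (hi : ¬ Hid d i) :
    Timg h d Z τ i = Finset.univ := by
  simp [Timg, Lset_of_nonhid hi, tau_of_nonhid hτ hi]

lemma invτ_spec {i : ℕ} {k : Fin (h i)} (hk : k ∈ Timg h d Z τ i) :
    invτ h d Z τ i k ∈ Lset h d Z i ∧ τ i (invτ h d Z τ i k) = k := by
  rw [Timg, Finset.mem_image] at hk
  obtain ⟨k₀, hk₀, rfl⟩ := hk
  have hex : ∃ k₁ ∈ Lset h d Z i, τ i k₁ = τ i k₀ := ⟨k₀, hk₀, rfl⟩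
  rw [invτ, dif_pos hex]
  exact ⟨hex.choose_spec.1, hex.choose_spec.2⟩

lemma invτ_tau (hτ : GoodTau h d Z σ τ) {i : ℕ} {k : Fin (h i)}
    (hk : k ∈ Lset h d Z i) : invτ h d Z τ i (τ i k) = k := by
  have hmem : τ i k ∈ Timg h d Z τ i := Finset.mem_image_of_mem _ hk
  have hs := invτ_spec (Z := Z) (τ := τ) hmem
  exact (hτ i).1 hs.1 hk hs.2

lemma invτ_of_nonhid (hτ : GoodTau h d Z σ τ) {i : ℕ} (hi : ¬ Hid d i)
    (k : Fin (h i)) : invτ h d Z τ i k = k := by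
  have hk : k ∈ Timg h d Z τ i := by rw [Timg_of_nonhid hτ hi]; exact Finset.mem_univ k
  have hs := invτ_spec (Z := Z) (τ := τ) hk
  have := hs.2
  rwa [tau_of_nonhid hτ hi] at this

lemma Timg_sub_Zs (hτ : GoodTau h d Z σ τ) {i : ℕ} (hi : Hid d i) :
    Timg h d Z τ i ⊆ Zs h d Z i := by
  intro k hk
  rw [Timg, Finset.mem_image] at hk
  obtain ⟨k₀, hk₀, rfl⟩ := hk
  exact (((hτ i).2.1 hi) k₀ hk₀).1

lemma Simg_sub_Lset {i : ℕ} : Simg h d Z σ i ⊆ Lset h d Z i := by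
  intro k hk
  rw [Simg, Finset.mem_image] at hk
  obtain ⟨k₀, hk₀, rfl⟩ := hk
  rw [L2, Finset.mem_filter] at hk₀
  exact mem_Lset.2 hk₀.2

lemma mem_SLimg_iff {i : ℕ} {k : Fin (h i)} :
    k ∈ SLimg h d Z σ i ↔ (σ i).symm k ∈ Lset h d Z i := by
  constructor
  · rintro hk
    rw [SLimg, Finset.mem_image] at hk
    obtain ⟨k₀, hk₀, rfl⟩ := hk
    simpa using hk₀
  · intro hk
    exact Finset.mem_image.2 ⟨(σ i).symm k, hk, by simp⟩

/-- Analysis of elements of `SLimg`. -/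
lemma mem_SLimg_cases (hτ : GoodTau h d Z σ τ) {i : ℕ} (hi : Hid d i)
    {k : Fin (h i)} (hk : k ∈ SLimg h d Z σ i) :
    (k ∈ Simg h d Z σ i) ∨
    (k ∈ Zs h d Z i ∧ k ∈ Timg h d Z τ i ∧ invτ h d Z τ i k = (σ i).symm k) := by
  have hj : (σ i).symm k ∈ Lset h d Z i := mem_SLimg_iff.1 hk
  by_cases h2 : σ i ((σ i).symm k) ∈ Zs h d Z i
  · right
    have hL1 : (σ i).symm k ∈ L1 h d Z σ i := by
      rw [L1, Finset.mem_filter]; exact ⟨hj, h2⟩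
    have htau := ((hτ i).2.1 hi) ((σ i).symm k) hj
    have heq : τ i ((σ i).symm k) = k := by
      rw [htau.2.1 h2]; simp
    refine ⟨by simpa [heq] using htau.1, ?_, ?_⟩
    · rw [← heq]; exact Finset.mem_image_of_mem _ hj
    · have h3 : invτ h d Z τ i (τ i ((σ i).symm k)) = (σ i).symm k := invτ_tau hτ hj
      rw [heq] at h3; exact h3
  · left
    have hL2 : (σ i).symm k ∈ L2 h d Z σ i := by
      rw [L2, Finset.mem_filter]; exact ⟨hj, h2⟩
    rw [Simg]
    exact Finset.mem_image.2 ⟨(σ i).symm k, hL2, by simp⟩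

lemma Simg_disj_Zs {i : ℕ} {k : Fin (h i)} (hk : k ∈ Simg h d Z σ i) :
    k ∉ Zs h d Z i := mem_Lset.1 (Simg_sub_Lset hk)

/-- `τ''L2` is disjoint from `SLimg`. -/
lemma tL2_disj_SLimg (hτ : GoodTau h d Z σ τ) {i : ℕ} (hi : Hid d i)
    {k : Fin (h i)} (hk : k ∈ (L2 h d Z σ i).image (τ i)) :
    k ∉ SLimg h d Z σ i := by
  rw [Finset.mem_image] at hk
  obtain ⟨k₂, hk₂, rfl⟩ := hk
  have hk₂' : k₂ ∈ Lset h d Z i ∧ σ i k₂ ∉ Zs h d Z i := by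
    simpa [L2, Finset.mem_filter] using hk₂
  have htau := ((hτ i).2.1 hi) k₂ hk₂'.1
  intro hmem
  rcases mem_SLimg_cases hτ hi hmem with hc | hc
  · -- τ k₂ ∈ Simg ⊆ Lset, but τ k₂ ∈ Zs
    exact (mem_Lset.1 (Simg_sub_Lset hc)) htau.1
  · -- τ k₂ ∈ Timg with invτ = σ.symm; so τ k₂ = σ j₁ with j₁ ∈ L1
    have h1 := htau.2.2 hk₂'.2
    apply h1
    have hj : (σ i).symm (τ i k₂) ∈ L1 h d Z σ i := by
      rw [L1, Finset.mem_filter]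
      constructor
      · exact mem_SLimg_iff.1 (by
          -- τ k₂ ∈ Timg ∧ invτ (τ k₂) = σ.symm (τ k₂); τ (invτ (τ k₂)) = τ k₂
          have hspec := invτ_spec (Z := Z) (τ := τ) hc.2.1
          have : (σ i).symm (τ i k₂) ∈ Lset h d Z i := by
            rw [← hc.2.2]; exact hspec.1
          exact mem_SLimg_iff.2 this)
      · simpa using hc.1
    exact Finset.mem_image.2 ⟨_, hj, by simp⟩

end Lems
section Lems2
variable {h : ℕ → ℕ} {d : ℕ} {Z : (i : ℕ) → Finset (Fin (h i))}
variable {σ : (i : ℕ) → Equiv.Perm (Fin (h i))}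
variable {τ : (i : ℕ) → Fin (h i) → Fin (h i)}
variable {θ : Params h d}

/-- Dead columns of `θ m` vanish. -/
lemma col_zero (hθ : HalfZeroed h d θ Z) (m : Fin d) {j : Fin (h (m : ℕ))}
    (hj : j ∈ Zs h d Z (m : ℕ)) (k : Fin (h ((m : ℕ) + 1))) : θ m k j = 0 := by
  by_cases hi : Hid d (m : ℕ)
  · rw [Zs_of_hid hi] at hj
    obtain ⟨mv, hmlt⟩ := m
    simp only at hj k ⊢
    have h1 : 1 ≤ mv := hi.1
    have h2 : mv < d := hi.2
    obtain ⟨n, rfl⟩ : ∃ n, mv = n + 1 := ⟨mv - 1, by omega⟩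
    exact ((hθ n h2).2 j hj).2 k
  · rw [Zs_of_nonhid hi] at hj
    exact absurd hj (Finset.notMem_empty j)

/-- Dead rows of `θ m` vanish. -/
lemma row_zero (hθ : HalfZeroed h d θ Z) (m : Fin d) {k : Fin (h ((m : ℕ) + 1))}
    (hk : k ∈ Zs h d Z ((m : ℕ) + 1)) (j : Fin (h (m : ℕ))) : θ m k j = 0 := by
  by_cases hi : Hid d ((m : ℕ) + 1)
  · rw [Zs_of_hid hi] at hk
    obtain ⟨mv, hmlt⟩ := m
    simp only at hk j ⊢
    exact ((hθ mv hi.2).2 k hk).1 j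
  · rw [Zs_of_nonhid hi] at hk
    exact absurd hk (Finset.notMem_empty k)

lemma hid_card (hθ : HalfZeroed h d θ Z) {i : ℕ} (hi : Hid d i) :
    h i ≤ 2 * (Zs h d Z i).card := by
  obtain ⟨h1, h2⟩ := hi
  obtain ⟨n, rfl⟩ : ∃ n, i = n + 1 := ⟨i - 1, by omega⟩
  have := (hθ n h2).1
  rw [Zs_of_hid ⟨h1, h2⟩]
  omega

/-- Existence of a good family of parking injections. -/
lemma exists_goodTau (hcard : ∀ i, Hid d i → h i ≤ 2 * (Zs h d Z i).card) :
    ∃ τ : (i : ℕ) → Fin (h i) → Fin (h i), GoodTau h d Z σ τ := by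
  have key : ∀ i, ∃ τi : Fin (h i) → Fin (h i),
      (Set.InjOn τi (Lset h d Z i)) ∧
      (Hid d i → ∀ k ∈ Lset h d Z i, τi k ∈ Zs h d Z i ∧
        (σ i k ∈ Zs h d Z i → τi k = σ i k) ∧
        (σ i k ∉ Zs h d Z i → τi k ∉ (L1 h d Z σ i).image (σ i))) ∧
      (¬ Hid d i → τi = id) := by
    intro i
    by_cases hi : Hid d i
    · -- build the injection on L2 into Zs \ σ''L1
      set T : Finset (Fin (h i)) := Zs h d Z i \ (L1 h d Z σ i).image (σ i) with hT
      have hsub : (L1 h d Z σ i).image (σ i) ⊆ Zs h d Z i := by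
        intro k hk
        rw [Finset.mem_image] at hk
        obtain ⟨k₀, hk₀, rfl⟩ := hk
        exact (Finset.mem_filter.1 hk₀).2
      have hcardT : T.card = (Zs h d Z i).card - (L1 h d Z σ i).card := by
        rw [hT, Finset.card_sdiff_of_subset hsub, Finset.card_image_of_injective _ (σ i).injective]
      have hL12 : (L1 h d Z σ i).card + (L2 h d Z σ i).card = (Lset h d Z i).card := by
        simpa [L1, L2] using
          Finset.card_filter_add_card_filter_not
            (s := Lset h d Z i) (fun k => σ i k ∈ Zs h d Z i)
      have hLcard : (Lset h d Z i).card = h i - (Zs h d Z i).card := by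
        rw [Lset, Finset.card_compl, Fintype.card_fin]
      have hle : (L2 h d Z σ i).card ≤ T.card := by
        have := hcard i hi
        have hz : (Zs h d Z i).card ≤ h i := by
          simpa using Finset.card_le_card (Finset.subset_univ (Zs h d Z i))
        omega
      have hemb : Nonempty ({x // x ∈ L2 h d Z σ i} ↪ {x // x ∈ T}) := by
        apply Function.Embedding.nonempty_of_card_le
        simpa [Fintype.card_coe] using hle
      obtain ⟨e⟩ := hemb
      set f : Fin (h i) → Fin (h i) := fun k =>
        if hk : k ∈ L2 h d Z σ i then ((e ⟨k, hk⟩ : {x // x ∈ T}) : Fin (h i))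
        else σ i k with hf
      have hfL2 : ∀ k (hk : k ∈ L2 h d Z σ i),
          f k = ((e ⟨k, hk⟩ : {x // x ∈ T}) : Fin (h i)) := fun k hk => dif_pos hk
      have hfnL2 : ∀ k, k ∉ L2 h d Z σ i → f k = σ i k := fun k hk => dif_neg hk
      have hT' : ∀ k (hk : k ∈ L2 h d Z σ i), f k ∈ Zs h d Z i ∧
          f k ∉ (L1 h d Z σ i).image (σ i) := by
        intro k hk
        have hmem : ((e ⟨k, hk⟩ : {x // x ∈ T}) : Fin (h i)) ∈ T := (e ⟨k, hk⟩).2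
        have hmem2 : ((e ⟨k, hk⟩ : {x // x ∈ T}) : Fin (h i)) ∈ Zs h d Z i ∧
            ((e ⟨k, hk⟩ : {x // x ∈ T}) : Fin (h i)) ∉ (L1 h d Z σ i).image (σ i) :=
          Finset.mem_sdiff.1 hmem
        rw [hfL2 k hk]
        exact hmem2
      have hmemL1 : ∀ k, k ∈ Lset h d Z i → k ∉ L2 h d Z σ i →
          σ i k ∈ Zs h d Z i := by
        intro k hk hk2
        by_contra hc
        exact hk2 (by rw [L2, Finset.mem_filter]; exact ⟨hk, hc⟩)
      refine ⟨f, ?_, ?_, fun hni => absurd hi hni⟩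
      · intro x hx y hy hxy
        have hx' : x ∈ Lset h d Z i := hx
        have hy' : y ∈ Lset h d Z i := hy
        by_cases hx2 : x ∈ L2 h d Z σ i <;> by_cases hy2 : y ∈ L2 h d Z σ i
        · rw [hfL2 x hx2, hfL2 y hy2] at hxy
          have := e.injective (Subtype.ext hxy)
          exact congrArg Subtype.val this
        · exfalso
          have hyL1 : y ∈ L1 h d Z σ i := by
            rw [L1, Finset.mem_filter]
            exact ⟨hy', hmemL1 y hy' hy2⟩
          have h1 := (hT' x hx2).2
          rw [hxy, hfnL2 y hy2] at h1
          exact h1 (Finset.mem_image_of_mem _ hyL1)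
        · exfalso
          have hxL1 : x ∈ L1 h d Z σ i := by
            rw [L1, Finset.mem_filter]
            exact ⟨hx', hmemL1 x hx' hx2⟩
          have h1 := (hT' y hy2).2
          rw [← hxy, hfnL2 x hx2] at h1
          exact h1 (Finset.mem_image_of_mem _ hxL1)
        · rw [hfnL2 x hx2, hfnL2 y hy2] at hxy
          exact (σ i).injective hxy
      · intro _ k hk
        by_cases hk2 : k ∈ L2 h d Z σ i
        · have hkσ : σ i k ∉ Zs h d Z i := (Finset.mem_filter.1 hk2).2
          exact ⟨(hT' k hk2).1, fun hc => absurd hc hkσ, fun _ => (hT' k hk2).2⟩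
        · have hkσ : σ i k ∈ Zs h d Z i := hmemL1 k hk hk2
          rw [hfnL2 k hk2]
          exact ⟨hkσ, fun _ => rfl, fun hc => absurd hkσ hc⟩
    · exact ⟨id, Function.injective_id.injOn, fun hc => absurd hc hi, fun _ => rfl⟩
  choose τ hτ using key
  exact ⟨τ, fun i => hτ i⟩

end Lems2
section Lems3
variable {h : ℕ → ℕ} {d : ℕ} {Z : (i : ℕ) → Finset (Fin (h i))}
variable {σ : (i : ℕ) → Equiv.Perm (Fin (h i))}
variable {τ : (i : ℕ) → Fin (h i) → Fin (h i)}
variable {θ : Params h d}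

lemma not_mem_Lset {i : ℕ} {k : Fin (h i)} :
    k ∉ Lset h d Z i ↔ k ∈ Zs h d Z i := by simp [Lset]

lemma eq_zero_of_nonhid (m : Fin d) (hn : ¬ Hid d (m : ℕ)) : (m : ℕ) = 0 := by
  have := m.isLt; simp only [Hid] at hn; omega

lemma eq_d_of_nonhid (m : Fin d) (hn : ¬ Hid d ((m : ℕ) + 1)) : (m : ℕ) + 1 = d := by
  have := m.isLt; simp only [Hid] at hn; omega

lemma sum_dead_cols (hθ : HalfZeroed h d θ Z) (m : Fin d)
    (k₀ : Fin (h ((m : ℕ) + 1))) (g v : Fin (h (m : ℕ)) → ℝ)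
    (hg : ∀ j ∈ Lset h d Z (m : ℕ), g j = v j) :
    ∑ j, θ m k₀ j * g j = ∑ j ∈ Lset h d Z (m : ℕ), θ m k₀ j * v j := by
  have h1 : ∑ j, θ m k₀ j * g j = ∑ j ∈ Lset h d Z (m : ℕ), θ m k₀ j * g j :=
    (Finset.sum_subset (Finset.subset_univ _) (fun j _ hj => by
      rw [col_zero hθ m (not_mem_Lset.1 hj), zero_mul])).symm
  rw [h1]
  exact Finset.sum_congr rfl (fun j hj => by rw [hg j hj])

lemma sum_guard_timg (hτ : GoodTau h d Z σ τ) (i : ℕ)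
    (A g v : Fin (h i) → ℝ)
    (hg : ∀ j ∈ Timg h d Z τ i, g j = v (invτ h d Z τ i j)) :
    ∑ j, (if j ∈ Timg h d Z τ i then A (invτ h d Z τ i j) else 0) * g j
      = ∑ j ∈ Lset h d Z i, A j * v j := by
  have h1 : ∀ j : Fin (h i),
      (if j ∈ Timg h d Z τ i then A (invτ h d Z τ i j) else 0) * g j
      = if j ∈ Timg h d Z τ i then A (invτ h d Z τ i j) * g j else 0 := by
    intro j; by_cases hj : j ∈ Timg h d Z τ i <;> simp [hj]
  rw [Finset.sum_congr rfl (fun j _ => h1 j), Finset.sum_ite_mem,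
    Finset.univ_inter]
  have h2 : ∑ j ∈ Timg h d Z τ i, A (invτ h d Z τ i j) * g j
      = ∑ j ∈ Timg h d Z τ i, A (invτ h d Z τ i j) * v (invτ h d Z τ i j) :=
    Finset.sum_congr rfl (fun j hj => by rw [hg j hj])
  rw [h2, Timg, Finset.sum_image (fun x hx y hy hxy => (hτ i).1 hx hy hxy)]
  exact Finset.sum_congr rfl (fun j hj => by rw [invτ_tau hτ hj])

lemma sum_guard_simg (hτ : GoodTau h d Z σ τ) (i : ℕ)
    (A g v : Fin (h i) → ℝ)
    (hg : ∀ j ∈ SLimg h d Z σ i, g j = v ((σ i).symm j)) :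
    ∑ j, (if j ∈ SLimg h d Z σ i then A ((σ i).symm j) else 0) * g j
      = ∑ j ∈ Lset h d Z i, A j * v j := by
  have h1 : ∀ j : Fin (h i),
      (if j ∈ SLimg h d Z σ i then A ((σ i).symm j) else 0) * g j
      = if j ∈ SLimg h d Z σ i then A ((σ i).symm j) * g j else 0 := by
    intro j; by_cases hj : j ∈ SLimg h d Z σ i <;> simp [hj]
  rw [Finset.sum_congr rfl (fun j _ => h1 j), Finset.sum_ite_mem,
    Finset.univ_inter]
  have h2 : ∑ j ∈ SLimg h d Z σ i, A ((σ i).symm j) * g j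
      = ∑ j ∈ SLimg h d Z σ i, A ((σ i).symm j) * v ((σ i).symm j) :=
    Finset.sum_congr rfl (fun j hj => by rw [hg j hj])
  rw [h2, SLimg, Finset.sum_image (fun x _ y _ hxy => (σ i).injective hxy)]
  simp

/-- On a non-hidden layer with identity permutation, everything is trivial. -/
lemma nonhid_pack (hτ : GoodTau h d Z σ τ) {i : ℕ} (hi : ¬ Hid d i)
    (hσi : σ i = Equiv.refl _) :
    Zs h d Z i = ∅ ∧ Lset h d Z i = Finset.univ ∧
    Timg h d Z τ i = Finset.univ ∧ Simg h d Z σ i = Finset.univ ∧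
    SLimg h d Z σ i = Finset.univ ∧ (∀ k, invτ h d Z τ i k = k) := by
  have hZ := Zs_of_nonhid (Z := Z) hi
  have hL := Lset_of_nonhid (Z := Z) hi
  have hL2 : L2 h d Z σ i = Finset.univ := by
    rw [L2, hZ, hL]; simp
  refine ⟨hZ, hL, Timg_of_nonhid hτ hi, ?_, ?_, invτ_of_nonhid hτ hi⟩
  · rw [Simg, hL2, hσi]; simp
  · rw [SLimg, hL, hσi]; simp

end Lems3
section Segs
variable {h : ℕ → ℕ} {d : ℕ} {Z : (i : ℕ) → Finset (Fin (h i))}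
variable {σ : (i : ℕ) → Equiv.Perm (Fin (h i))}
variable {τ : (i : ℕ) → Fin (h i) → Fin (h i)}
variable {θ : Params h d}

lemma hid_of_mem_Zs {i : ℕ} {k : Fin (h i)} (hk : k ∈ Zs h d Z i) : Hid d i := by
  by_contra hn
  rw [Zs_of_nonhid hn] at hk
  exact absurd hk (Finset.notMem_empty k)

lemma r1_live (hτ : GoodTau h d Z σ τ) {i : ℕ} {k : Fin (h i)}
    (hk : k ∉ Zs h d Z i) : r1 h d Z τ i k = k := by
  rw [r1]
  split
  · rename_i hkt
    by_cases hi : Hid d i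
    · exact absurd (Timg_sub_Zs hτ hi hkt) hk
    · exact invτ_of_nonhid hτ hi k
  · rfl

lemma not_hid_d : ¬ Hid d d := fun hc => lt_irrefl d hc.2

lemma not_hid_zero : ¬ Hid d 0 := fun hc => absurd hc.1 (by omega)

lemma seg1_net (hθ : HalfZeroed h d θ Z) (hτ : GoodTau h d Z σ τ)
    {s : ℝ} (hs0 : 0 ≤ s) (x : Fin (h 0) → ℝ) :
    net h d ((1 - s) • θ + s • P1 h d Z τ θ) x = net h d θ x := by
  have ha : ∀ (i : ℕ) (k : Fin (h i)), 0 ≤ a1 h d Z τ s i k := by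
    intro i k
    simp only [a1]
    split
    · split
      · exact hs0
      · exact le_refl 0
    · exact zero_le_one
  have key := net_rel h d θ ((1 - s) • θ + s • P1 h d Z τ θ) (fun _ => ∅)
    (c1 h d Z τ) (a1 h d Z τ s) ha
    (fun k => by simp [a1, Zs_of_nonhid (not_hid_zero (d := d))])
    (fun k => by simp [c1, Zs_of_nonhid (not_hid_zero (d := d))])
    ?_
  · funext k
    have hcon := key x k (by simp)
    rw [hcon]
    simp [a1, c1, Zs_of_nonhid (not_hid_d (d := d))]
  · intro m k hk v w hw
    have hE : ∀ (k' : Fin (h ((m : ℕ) + 1))) (j : Fin (h (m : ℕ))),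
        ((1 - s) • θ + s • P1 h d Z τ θ) m k' j
          = (1 - s) * θ m k' j + s * θ m (r1 h d Z τ ((m : ℕ) + 1) k') j := by
      intro k' j
      simp [P1, Pi.add_apply, Pi.smul_apply, Matrix.add_apply, Matrix.smul_apply,
        smul_eq_mul]
    simp only [Matrix.mulVec, dotProduct]
    have hwv : ∀ j ∈ Lset h d Z (m : ℕ), w j = v j := by
      intro j hj
      rw [hw j (by simp)]
      have hjz := mem_Lset.1 hj
      simp [a1, c1, hjz]
    by_cases hkz : k ∈ Zs h d Z ((m : ℕ) + 1)
    · by_cases hkt : k ∈ Timg h d Z τ ((m : ℕ) + 1)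
      · -- parked copy of a live row
        have hrow : ∀ j, ((1 - s) • θ + s • P1 h d Z τ θ) m k j
            = s * θ m (invτ h d Z τ ((m : ℕ) + 1) k) j := by
          intro j
          rw [hE, row_zero hθ m hkz j, r1, if_pos hkt]
          ring
        calc ∑ j, ((1 - s) • θ + s • P1 h d Z τ θ) m k j * w j
            = ∑ j, s * (θ m (invτ h d Z τ ((m : ℕ) + 1) k) j * w j) := by
              refine Finset.sum_congr rfl (fun j _ => ?_)
              rw [hrow j]; ring
          _ = s * ∑ j ∈ Lset h d Z (m : ℕ),
                θ m (invτ h d Z τ ((m : ℕ) + 1) k) j * v j := by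
              rw [← Finset.mul_sum, sum_dead_cols hθ m _ w v hwv]
          _ = a1 h d Z τ s ((m : ℕ) + 1) k *
                ∑ j, θ m (c1 h d Z τ ((m : ℕ) + 1) k) j * v j := by
              rw [sum_dead_cols hθ m _ v v (fun _ _ => rfl)]
              simp [a1, c1, hkz, hkt]
      · -- genuinely dead row
        have hrow : ∀ j, ((1 - s) • θ + s • P1 h d Z τ θ) m k j = 0 := by
          intro j
          rw [hE, r1, if_neg hkt, row_zero hθ m hkz j]
          ring
        simp only [hrow, zero_mul, Finset.sum_const_zero]
        simp [a1, hkz, hkt]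
    · -- live row: unchanged
      have hrow : ∀ j, ((1 - s) • θ + s • P1 h d Z τ θ) m k j = θ m k j := by
        intro j
        rw [hE, r1_live hτ hkz]
        ring
      calc ∑ j, ((1 - s) • θ + s • P1 h d Z τ θ) m k j * w j
          = ∑ j, θ m k j * w j :=
            Finset.sum_congr rfl (fun j _ => by rw [hrow j])
        _ = ∑ j ∈ Lset h d Z (m : ℕ), θ m k j * v j := sum_dead_cols hθ m _ w v hwv
        _ = a1 h d Z τ s ((m : ℕ) + 1) k *
              ∑ j, θ m (c1 h d Z τ ((m : ℕ) + 1) k) j * v j := by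
            rw [sum_dead_cols hθ m _ v v (fun _ _ => rfl)]
            simp [a1, c1, hkz]

end Segs
section Seg2
variable {h : ℕ → ℕ} {d : ℕ} {Z : (i : ℕ) → Finset (Fin (h i))}
variable {σ : (i : ℕ) → Equiv.Perm (Fin (h i))}
variable {τ : (i : ℕ) → Fin (h i) → Fin (h i)}
variable {θ : Params h d}

/-- `w`-transfer on `Timg` for the coefficient families built from `a2/c1`-like data. -/
lemma wv_timg (hτ : GoodTau h d Z σ τ) {i : ℕ} {v w : Fin (h i) → ℝ}
    (hw : ∀ j ∈ Timg h d Z τ i, w j = a2 h d Z τ i j * v (c1 h d Z τ i j)) :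
    ∀ j ∈ Timg h d Z τ i, w j = v (invτ h d Z τ i j) := by
  intro j hj
  rw [hw j hj]
  by_cases hi : Hid d i
  · have hjz : j ∈ Zs h d Z i := Timg_sub_Zs hτ hi hj
    simp [a2, c1, hjz, hj]
  · have hjz : j ∉ Zs h d Z i := by rw [Zs_of_nonhid hi]; exact Finset.notMem_empty j
    simp [a2, c1, hjz, invτ_of_nonhid hτ hi j]

lemma wv_lset {i : ℕ} {v w : Fin (h i) → ℝ}
    (hw : ∀ j, w j = a2 h d Z τ i j * v (c1 h d Z τ i j)) :
    ∀ j ∈ Lset h d Z i, w j = v j := by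
  intro j hj
  rw [hw j]
  have hjz := mem_Lset.1 hj
  simp [a2, c1, hjz]

lemma seg2_net (hθ : HalfZeroed h d θ Z) (hτ : GoodTau h d Z σ τ)
    {s : ℝ} (hs0 : 0 ≤ s) (hs1 : s ≤ 1) (x : Fin (h 0) → ℝ) :
    net h d ((1 - s) • P1 h d Z τ θ + s • P2 h d Z τ θ) x = net h d θ x := by
  have ha : ∀ (i : ℕ) (k : Fin (h i)), 0 ≤ a2 h d Z τ i k := by
    intro i k
    simp only [a2]
    split
    · split
      · exact zero_le_one
      · exact le_refl 0
    · exact zero_le_one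
  have key := net_rel h d θ ((1 - s) • P1 h d Z τ θ + s • P2 h d Z τ θ) (fun _ => ∅)
    (c1 h d Z τ) (a2 h d Z τ) ha
    (fun k => by simp [a2, Zs_of_nonhid (not_hid_zero (d := d))])
    (fun k => by simp [c1, Zs_of_nonhid (not_hid_zero (d := d))])
    ?_
  · funext k
    have hcon := key x k (by simp)
    rw [hcon]
    simp [a2, c1, Zs_of_nonhid (not_hid_d (d := d))]
  · intro m k hk v w hw
    have hw' : ∀ j, w j = a2 h d Z τ (m : ℕ) j * v (c1 h d Z τ (m : ℕ) j) :=
      fun j => hw j (by simp)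
    have hE : ∀ (k' : Fin (h ((m : ℕ) + 1))) (j : Fin (h (m : ℕ))),
        ((1 - s) • P1 h d Z τ θ + s • P2 h d Z τ θ) m k' j
          = (1 - s) * θ m (r1 h d Z τ ((m : ℕ) + 1) k') j
            + s * (if j ∈ Timg h d Z τ (m : ℕ) then
                θ m (r1 h d Z τ ((m : ℕ) + 1) k') (invτ h d Z τ (m : ℕ) j) else 0) := by
      intro k' j
      simp [P1, P2, Pi.add_apply, Pi.smul_apply, Matrix.add_apply, Matrix.smul_apply,
        smul_eq_mul]
    simp only [Matrix.mulVec, dotProduct]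
    by_cases hdead : k ∈ Zs h d Z ((m : ℕ) + 1) ∧ k ∉ Timg h d Z τ ((m : ℕ) + 1)
    · -- dead row
      have hr1 : r1 h d Z τ ((m : ℕ) + 1) k = k := by rw [r1, if_neg hdead.2]
      have hrow : ∀ j, ((1 - s) • P1 h d Z τ θ + s • P2 h d Z τ θ) m k j = 0 := by
        intro j
        rw [hE, hr1, row_zero hθ m hdead.1]
        split
        · rw [row_zero hθ m hdead.1]; ring
        · ring
      simp only [hrow, zero_mul, Finset.sum_const_zero]
      simp [a2, hdead.1, hdead.2]
    · -- row carrying live content `k₀`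
      set k₀ := r1 h d Z τ ((m : ℕ) + 1) k with hk₀
      calc ∑ j, ((1 - s) • P1 h d Z τ θ + s • P2 h d Z τ θ) m k j * w j
          = ∑ j, ((1 - s) * (θ m k₀ j * w j)
              + s * ((if j ∈ Timg h d Z τ (m : ℕ) then
                  θ m k₀ (invτ h d Z τ (m : ℕ) j) else 0) * w j)) := by
            refine Finset.sum_congr rfl (fun j _ => ?_)
            rw [hE]; ring
        _ = (1 - s) * ∑ j, θ m k₀ j * w j
            + s * ∑ j, (if j ∈ Timg h d Z τ (m : ℕ) then
                θ m k₀ (invτ h d Z τ (m : ℕ) j) else 0) * w j := by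
            rw [Finset.sum_add_distrib, Finset.mul_sum, Finset.mul_sum]
        _ = (1 - s) * ∑ j ∈ Lset h d Z (m : ℕ), θ m k₀ j * v j
            + s * ∑ j ∈ Lset h d Z (m : ℕ), θ m k₀ j * v j := by
            rw [sum_dead_cols hθ m _ w v (wv_lset hw'),
              sum_guard_timg hτ (m : ℕ) _ w v (wv_timg hτ (fun j _ => hw' j))]
        _ = ∑ j ∈ Lset h d Z (m : ℕ), θ m k₀ j * v j := by ring
        _ = a2 h d Z τ ((m : ℕ) + 1) k *
              ∑ j, θ m (c1 h d Z τ ((m : ℕ) + 1) k) j * v j := by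
            rw [sum_dead_cols hθ m _ v v (fun _ _ => rfl)]
            by_cases hkz : k ∈ Zs h d Z ((m : ℕ) + 1)
            · have hkt : k ∈ Timg h d Z τ ((m : ℕ) + 1) := by
                by_contra hc; exact hdead ⟨hkz, hc⟩
              rw [hk₀, r1, if_pos hkt]
              simp [a2, c1, hkz, hkt]
            · rw [hk₀, r1_live hτ hkz]
              simp [a2, c1, hkz]

end Seg2
section Seg3
variable {h : ℕ → ℕ} {d : ℕ} {Z : (i : ℕ) → Finset (Fin (h i))}
variable {σ : (i : ℕ) → Equiv.Perm (Fin (h i))}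
variable {τ : (i : ℕ) → Fin (h i) → Fin (h i)}
variable {θ : Params h d}

lemma timg_not_W3 (hτ : GoodTau h d Z σ τ) {i : ℕ} {j : Fin (h i)}
    (hj : j ∈ Timg h d Z τ i) : j ∉ W3 h d Z i := by
  rw [W3]
  split
  · rename_i hi
    simp only [Finset.mem_compl, not_not]
    exact Timg_sub_Zs hτ hi hj
  · exact Finset.notMem_empty j

lemma seg3_net (hθ : HalfZeroed h d θ Z) (hτ : GoodTau h d Z σ τ)
    (s : ℝ) (x : Fin (h 0) → ℝ) :
    net h d ((1 - s) • P2 h d Z τ θ + s • P3 h d Z σ τ θ) x = net h d θ x := by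
  have ha : ∀ (i : ℕ) (k : Fin (h i)), 0 ≤ a2 h d Z τ i k := by
    intro i k
    simp only [a2]
    split
    · split
      · exact zero_le_one
      · exact le_refl 0
    · exact zero_le_one
  have key := net_rel h d θ ((1 - s) • P2 h d Z τ θ + s • P3 h d Z σ τ θ)
    (W3 h d Z) (c1 h d Z τ) (a2 h d Z τ) ha
    (fun k => by simp [a2, Zs_of_nonhid (not_hid_zero (d := d))])
    (fun k => by simp [c1, Zs_of_nonhid (not_hid_zero (d := d))])
    ?_
  · funext k
    have hcon := key x k (by simp [W3, not_hid_d (d := d)])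
    rw [hcon]
    simp [a2, c1, Zs_of_nonhid (not_hid_d (d := d))]
  · intro m k hk v w hw
    have hwt : ∀ j ∈ Timg h d Z τ (m : ℕ), w j = v (invτ h d Z τ (m : ℕ) j) :=
      wv_timg hτ (fun j hj => hw j (timg_not_W3 hτ hj))
    have hE : ∀ (k' : Fin (h ((m : ℕ) + 1))) (j : Fin (h (m : ℕ))),
        ((1 - s) • P2 h d Z τ θ + s • P3 h d Z σ τ θ) m k' j
          = (1 - s) * (if j ∈ Timg h d Z τ (m : ℕ) then
                θ m (r1 h d Z τ ((m : ℕ) + 1) k') (invτ h d Z τ (m : ℕ) j) else 0)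
            + s * (eps3 h d Z σ ((m : ℕ) + 1) k' *
                (if j ∈ Timg h d Z τ (m : ℕ) then
                  θ m (r3 h d Z σ τ ((m : ℕ) + 1) k') (invτ h d Z τ (m : ℕ) j) else 0)) := by
      intro k' j
      simp [P2, P3, Pi.add_apply, Pi.smul_apply, Matrix.add_apply, Matrix.smul_apply,
        smul_eq_mul]
    simp only [Matrix.mulVec, dotProduct]
    by_cases hkt : k ∈ Timg h d Z τ ((m : ℕ) + 1)
    · -- row carrying live content
      have heps : eps3 h d Z σ ((m : ℕ) + 1) k = 1 := by
        rw [eps3, if_neg]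
        rintro ⟨hidR, hL, -⟩
        exact (mem_Lset.1 hL) (Timg_sub_Zs hτ hidR hkt)
      have hr3 : r3 h d Z σ τ ((m : ℕ) + 1) k = invτ h d Z τ ((m : ℕ) + 1) k := by
        rw [r3, if_neg, r1, if_pos hkt]
        rintro ⟨hidR, hS⟩
        exact Simg_disj_Zs hS (Timg_sub_Zs hτ hidR hkt)
      have hrow : ∀ j, ((1 - s) • P2 h d Z τ θ + s • P3 h d Z σ τ θ) m k j
          = (if j ∈ Timg h d Z τ (m : ℕ) then
              θ m (invτ h d Z τ ((m : ℕ) + 1) k) (invτ h d Z τ (m : ℕ) j) else 0) := by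
        intro j
        rw [hE, heps, hr3, r1, if_pos hkt]
        ring
      calc ∑ j, ((1 - s) • P2 h d Z τ θ + s • P3 h d Z σ τ θ) m k j * w j
          = ∑ j, (if j ∈ Timg h d Z τ (m : ℕ) then
              θ m (invτ h d Z τ ((m : ℕ) + 1) k) (invτ h d Z τ (m : ℕ) j) else 0) * w j :=
            Finset.sum_congr rfl (fun j _ => by rw [hrow j])
        _ = ∑ j ∈ Lset h d Z (m : ℕ),
              θ m (invτ h d Z τ ((m : ℕ) + 1) k) j * v j :=
            sum_guard_timg hτ (m : ℕ) _ w v hwt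
        _ = a2 h d Z τ ((m : ℕ) + 1) k *
              ∑ j, θ m (c1 h d Z τ ((m : ℕ) + 1) k) j * v j := by
            rw [sum_dead_cols hθ m _ v v (fun _ _ => rfl)]
            by_cases hkz : k ∈ Zs h d Z ((m : ℕ) + 1)
            · simp [a2, c1, hkz, hkt]
            · have hnh : ¬ Hid d ((m : ℕ) + 1) := by
                intro hidR
                exact hkz (Timg_sub_Zs hτ hidR hkt)
              rw [invτ_of_nonhid hτ hnh k]
              simp [a2, c1, hkz]
    · -- dead row
      have hidR : Hid d ((m : ℕ) + 1) := by
        by_contra hn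
        exact hkt (by rw [Timg_of_nonhid hτ hn]; exact Finset.mem_univ k)
      have hkz : k ∈ Zs h d Z ((m : ℕ) + 1) := by
        rw [W3, if_pos hidR] at hk
        simpa using hk
      have hr1 : r1 h d Z τ ((m : ℕ) + 1) k = k := by rw [r1, if_neg hkt]
      have hr3 : r3 h d Z σ τ ((m : ℕ) + 1) k = k := by
        rw [r3, if_neg, hr1]
        rintro ⟨-, hS⟩
        exact Simg_disj_Zs hS hkz
      have hrow : ∀ j, ((1 - s) • P2 h d Z τ θ + s • P3 h d Z σ τ θ) m k j = 0 := by
        intro j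
        rw [hE, hr1, hr3]
        by_cases hj : j ∈ Timg h d Z τ (m : ℕ) <;>
          simp [hj, row_zero hθ m hkz]
      simp only [hrow, zero_mul, Finset.sum_const_zero]
      simp [a2, hkz, hkt]

end Seg3
section Seg4
variable {h : ℕ → ℕ} {d : ℕ} {Z : (i : ℕ) → Finset (Fin (h i))}
variable {σ : (i : ℕ) → Equiv.Perm (Fin (h i))}
variable {τ : (i : ℕ) → Fin (h i) → Fin (h i)}
variable {θ : Params h d}

lemma seg4_net (hθ : HalfZeroed h d θ Z) (hτ : GoodTau h d Z σ τ)
    (hσ0 : σ 0 = Equiv.refl _)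
    (s : ℝ) (x : Fin (h 0) → ℝ) :
    net h d ((1 - s) • P3 h d Z σ τ θ + s • P4 h d Z σ τ θ) x = net h d θ x := by
  have ha : ∀ (i : ℕ) (k : Fin (h i)), 0 ≤ a4 h d Z σ τ i k := by
    intro i k
    simp only [a4]
    split
    · split
      · exact zero_le_one
      · exact le_refl 0
    · exact zero_le_one
  have key := net_rel h d θ ((1 - s) • P3 h d Z σ τ θ + s • P4 h d Z σ τ θ)
    (fun _ => ∅) (c4 h d Z σ τ) (a4 h d Z σ τ) ha
    (fun k => by simp [a4, not_hid_zero (d := d)])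
    (fun k => by
      simp [c4, c1, not_hid_zero (d := d), Zs_of_nonhid (not_hid_zero (d := d))])
    ?_
  · funext k
    have hcon := key x k (by simp)
    rw [hcon]
    simp [a4, c4, c1, not_hid_d (d := d), Zs_of_nonhid (not_hid_d (d := d))]
  · intro m k hk v w hw
    have hwT : ∀ j ∈ Timg h d Z τ (m : ℕ), w j = v (invτ h d Z τ (m : ℕ) j) := by
      intro j hj
      rw [hw j (by simp)]
      by_cases hidC : Hid d (m : ℕ)
      · have hz := Timg_sub_Zs hτ hidC hj
        have hSneg : j ∉ Simg h d Z σ (m : ℕ) := fun hc => Simg_disj_Zs hc hz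
        simp [a4, c4, c1, hidC, hz, hj, hSneg]
      · have hjz : j ∉ Zs h d Z (m : ℕ) := by
          rw [Zs_of_nonhid hidC]; exact Finset.notMem_empty j
        simp [a4, c4, c1, hidC, hjz, invτ_of_nonhid hτ hidC j]
    have hwS : ∀ j ∈ SLimg h d Z σ (m : ℕ), w j = v ((σ (m : ℕ)).symm j) := by
      intro j hj
      rw [hw j (by simp)]
      by_cases hidC : Hid d (m : ℕ)
      · rcases mem_SLimg_cases hτ hidC hj with hS | ⟨hz, ht, hinv⟩
        · simp [a4, c4, hidC, hS]
        · have hSneg : j ∉ Simg h d Z σ (m : ℕ) := fun hc => Simg_disj_Zs hc hz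
          simp [a4, c4, c1, hidC, hz, ht, hSneg, hinv]
      · have hC0 := eq_zero_of_nonhid m hidC
        have hσC : σ (m : ℕ) = Equiv.refl _ := by rw [hC0]; exact hσ0
        have hjz : j ∉ Zs h d Z (m : ℕ) := by
          rw [Zs_of_nonhid hidC]; exact Finset.notMem_empty j
        simp [a4, c4, c1, hidC, hjz, hσC]
    have hE : ∀ (k' : Fin (h ((m : ℕ) + 1))) (j : Fin (h (m : ℕ))),
        ((1 - s) • P3 h d Z σ τ θ + s • P4 h d Z σ τ θ) m k' j
          = (1 - s) * (eps3 h d Z σ ((m : ℕ) + 1) k' *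
              (if j ∈ Timg h d Z τ (m : ℕ) then
                θ m (r3 h d Z σ τ ((m : ℕ) + 1) k') (invτ h d Z τ (m : ℕ) j) else 0))
            + s * (eps3 h d Z σ ((m : ℕ) + 1) k' *
              (if j ∈ SLimg h d Z σ (m : ℕ) then
                θ m (r3 h d Z σ τ ((m : ℕ) + 1) k') ((σ (m : ℕ)).symm j) else 0)) := by
      intro k' j
      simp [P3, P4, Pi.add_apply, Pi.smul_apply, Matrix.add_apply, Matrix.smul_apply,
        smul_eq_mul]
    simp only [Matrix.mulVec, dotProduct]
    by_cases heps0 : Hid d ((m : ℕ) + 1) ∧ k ∈ Lset h d Z ((m : ℕ) + 1) ∧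
        k ∉ Simg h d Z σ ((m : ℕ) + 1)
    · -- zeroed-out live row
      have heps : eps3 h d Z σ ((m : ℕ) + 1) k = 0 := by rw [eps3, if_pos heps0]
      have hrow : ∀ j, ((1 - s) • P3 h d Z σ τ θ + s • P4 h d Z σ τ θ) m k j = 0 := by
        intro j; rw [hE, heps]; ring
      simp only [hrow, zero_mul, Finset.sum_const_zero]
      have hkz : k ∉ Zs h d Z ((m : ℕ) + 1) := mem_Lset.1 heps0.2.1
      simp [a4, heps0.1, heps0.2.2, hkz]
    · have heps : eps3 h d Z σ ((m : ℕ) + 1) k = 1 := by rw [eps3, if_neg heps0]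
      by_cases hdead : k ∈ Zs h d Z ((m : ℕ) + 1) ∧ k ∉ Timg h d Z τ ((m : ℕ) + 1) ∧
          k ∉ Simg h d Z σ ((m : ℕ) + 1)
      · -- genuinely dead row
        have hr3 : r3 h d Z σ τ ((m : ℕ) + 1) k = k := by
          rw [r3, if_neg (fun hc => hdead.2.2 hc.2), r1, if_neg hdead.2.1]
        have hrow : ∀ j, ((1 - s) • P3 h d Z σ τ θ + s • P4 h d Z σ τ θ) m k j = 0 := by
          intro j
          rw [hE, hr3]
          have hz1 : ∀ j', θ m k j' = 0 := row_zero hθ m hdead.1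
          by_cases hj1 : j ∈ Timg h d Z τ (m : ℕ) <;>
            by_cases hj2 : j ∈ SLimg h d Z σ (m : ℕ) <;>
            simp [hj1, hj2, hz1]
        simp only [hrow, zero_mul, Finset.sum_const_zero]
        have hidR : Hid d ((m : ℕ) + 1) := hid_of_mem_Zs hdead.1
        simp [a4, hidR, hdead.2.1, hdead.2.2, hdead.1]
      · -- row carrying live content
        have hgood : a4 h d Z σ τ ((m : ℕ) + 1) k = 1 ∧
            c4 h d Z σ τ ((m : ℕ) + 1) k = r3 h d Z σ τ ((m : ℕ) + 1) k := by
          by_cases hidR : Hid d ((m : ℕ) + 1)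
          · by_cases hS : k ∈ Simg h d Z σ ((m : ℕ) + 1)
            · constructor
              · rw [a4, if_pos hidR, if_pos (Or.inl hS)]
              · rw [c4, if_pos ⟨hidR, hS⟩, r3, if_pos ⟨hidR, hS⟩]
            · have hkz : k ∈ Zs h d Z ((m : ℕ) + 1) := by
                by_contra hc
                exact heps0 ⟨hidR, mem_Lset.2 hc, hS⟩
              have hkt : k ∈ Timg h d Z τ ((m : ℕ) + 1) := by
                by_contra hc
                exact hdead ⟨hkz, hc, hS⟩
              constructor
              · rw [a4, if_pos hidR, if_pos (Or.inr ⟨hkz, hkt⟩)]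
              · rw [c4, if_neg (fun hc => hS hc.2), c1, if_pos ⟨hkz, hkt⟩,
                  r3, if_neg (fun hc => hS hc.2), r1, if_pos hkt]
          · have hkz : k ∉ Zs h d Z ((m : ℕ) + 1) := by
              rw [Zs_of_nonhid hidR]; exact Finset.notMem_empty k
            constructor
            · rw [a4, if_neg hidR]
            · rw [c4, if_neg (fun hc => hidR hc.1), c1,
                if_neg (fun hc => hkz hc.1), r3, if_neg (fun hc => hidR hc.1),
                r1_live hτ hkz]
        calc ∑ j, ((1 - s) • P3 h d Z σ τ θ + s • P4 h d Z σ τ θ) m k j * w j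
            = ∑ j, ((1 - s) * ((if j ∈ Timg h d Z τ (m : ℕ) then
                  θ m (r3 h d Z σ τ ((m : ℕ) + 1) k) (invτ h d Z τ (m : ℕ) j) else 0) * w j)
                + s * ((if j ∈ SLimg h d Z σ (m : ℕ) then
                  θ m (r3 h d Z σ τ ((m : ℕ) + 1) k) ((σ (m : ℕ)).symm j) else 0) * w j)) := by
              refine Finset.sum_congr rfl (fun j _ => ?_)
              rw [hE, heps]; ring
          _ = (1 - s) * ∑ j, (if j ∈ Timg h d Z τ (m : ℕ) then
                  θ m (r3 h d Z σ τ ((m : ℕ) + 1) k) (invτ h d Z τ (m : ℕ) j) else 0) * w j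
              + s * ∑ j, (if j ∈ SLimg h d Z σ (m : ℕ) then
                  θ m (r3 h d Z σ τ ((m : ℕ) + 1) k) ((σ (m : ℕ)).symm j) else 0) * w j := by
              rw [Finset.sum_add_distrib, Finset.mul_sum, Finset.mul_sum]
          _ = (1 - s) * ∑ j ∈ Lset h d Z (m : ℕ),
                  θ m (r3 h d Z σ τ ((m : ℕ) + 1) k) j * v j
              + s * ∑ j ∈ Lset h d Z (m : ℕ),
                  θ m (r3 h d Z σ τ ((m : ℕ) + 1) k) j * v j := by
              rw [sum_guard_timg hτ (m : ℕ) _ w v hwT,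
                sum_guard_simg hτ (m : ℕ) _ w v hwS]
          _ = ∑ j ∈ Lset h d Z (m : ℕ),
                θ m (r3 h d Z σ τ ((m : ℕ) + 1) k) j * v j := by ring
          _ = a4 h d Z σ τ ((m : ℕ) + 1) k *
                ∑ j, θ m (c4 h d Z σ τ ((m : ℕ) + 1) k) j * v j := by
              rw [sum_dead_cols hθ m _ v v (fun _ _ => rfl), hgood.1, hgood.2, one_mul]

end Seg4
section Seg5
variable {h : ℕ → ℕ} {d : ℕ} {Z : (i : ℕ) → Finset (Fin (h i))}
variable {σ : (i : ℕ) → Equiv.Perm (Fin (h i))}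
variable {τ : (i : ℕ) → Fin (h i) → Fin (h i)}
variable {θ : Params h d}

lemma Simg_sub_SLimg {i : ℕ} : Simg h d Z σ i ⊆ SLimg h d Z σ i := by
  intro k hk
  rw [Simg, Finset.mem_image] at hk
  obtain ⟨k₀, hk₀, rfl⟩ := hk
  exact Finset.mem_image_of_mem _ ((Finset.mem_filter.1 hk₀).1)

lemma timg_mem_SLimg (hτ : GoodTau h d Z σ τ) {i : ℕ} (hi : Hid d i)
    {k : Fin (h i)} (hkt : k ∈ Timg h d Z τ i)
    (hkW : k ∉ (L2 h d Z σ i).image (τ i)) : k ∈ SLimg h d Z σ i := by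
  rw [Timg, Finset.mem_image] at hkt
  obtain ⟨k₁, hk₁, rfl⟩ := hkt
  by_cases hσk : σ i k₁ ∈ Zs h d Z i
  · have := (((hτ i).2.1 hi) k₁ hk₁).2.1 hσk
    rw [this]
    exact Finset.mem_image_of_mem _ hk₁
  · exfalso
    apply hkW
    exact Finset.mem_image_of_mem _ (by rw [L2, Finset.mem_filter]; exact ⟨hk₁, hσk⟩)

lemma symm_mem_Zs_of_not_SLimg {i : ℕ} {j : Fin (h i)}
    (hj : j ∉ SLimg h d Z σ i) : (σ i).symm j ∈ Zs h d Z i := by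
  by_contra hc
  exact hj (mem_SLimg_iff.2 (mem_Lset.2 hc))

lemma seg5_net (hθ : HalfZeroed h d θ Z) (hτ : GoodTau h d Z σ τ)
    (hσ0 : σ 0 = Equiv.refl _) (hσd : σ d = Equiv.refl _)
    (s : ℝ) (x : Fin (h 0) → ℝ) :
    net h d ((1 - s) • P4 h d Z σ τ θ + s • permuteParams h d θ σ) x
      = net h d θ x := by
  have ha : ∀ (i : ℕ) (k : Fin (h i)), 0 ≤ a5 h d Z σ i k := by
    intro i k
    simp only [a5]
    split
    · split
      · exact zero_le_one
      · exact le_refl 0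
    · exact zero_le_one
  have key := net_rel h d θ ((1 - s) • P4 h d Z σ τ θ + s • permuteParams h d θ σ)
    (W5 h d Z σ τ) (c5 h d Z σ) (a5 h d Z σ) ha
    (fun k => by simp [a5, not_hid_zero (d := d)])
    (fun k => by simp [c5, not_hid_zero (d := d)])
    ?_
  · funext k
    have hcon := key x k (by simp [W5, not_hid_d (d := d)])
    rw [hcon]
    simp [a5, c5, not_hid_d (d := d)]
  · intro m k hk v w hw
    have hwS : ∀ j ∈ SLimg h d Z σ (m : ℕ), w j = v ((σ (m : ℕ)).symm j) := by
      intro j hj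
      have hjW : j ∉ W5 h d Z σ τ (m : ℕ) := by
        rw [W5]
        split
        · rename_i hidC
          intro hc
          exact tL2_disj_SLimg hτ hidC hc hj
        · exact Finset.notMem_empty j
      rw [hw j hjW]
      by_cases hidC : Hid d (m : ℕ)
      · simp [a5, c5, hidC, hj]
      · have hC0 := eq_zero_of_nonhid m hidC
        have hσC : σ (m : ℕ) = Equiv.refl _ := by rw [hC0]; exact hσ0
        simp [a5, c5, hidC, hσC]
    have hE : ∀ (k' : Fin (h ((m : ℕ) + 1))) (j : Fin (h (m : ℕ))),
        ((1 - s) • P4 h d Z σ τ θ + s • permuteParams h d θ σ) m k' j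
          = (1 - s) * (eps3 h d Z σ ((m : ℕ) + 1) k' *
              (if j ∈ SLimg h d Z σ (m : ℕ) then
                θ m (r3 h d Z σ τ ((m : ℕ) + 1) k') ((σ (m : ℕ)).symm j) else 0))
            + s * θ m ((σ ((m : ℕ) + 1)).symm k') ((σ (m : ℕ)).symm j) := by
      intro k' j
      simp [P4, permuteParams, Pi.add_apply, Pi.smul_apply, Matrix.add_apply,
        Matrix.smul_apply, smul_eq_mul]
    simp only [Matrix.mulVec, dotProduct]
    -- the common "good row" computation
    have main : ∀ (k₀ : Fin (h ((m : ℕ) + 1))),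
        (∀ j, ((1 - s) • P4 h d Z σ τ θ + s • permuteParams h d θ σ) m k j
          = (if j ∈ SLimg h d Z σ (m : ℕ) then
              θ m k₀ ((σ (m : ℕ)).symm j) else 0)) →
        ∑ j, ((1 - s) • P4 h d Z σ τ θ + s • permuteParams h d θ σ) m k j * w j
          = ∑ j ∈ Lset h d Z (m : ℕ), θ m k₀ j * v j := by
      intro k₀ hrow
      calc ∑ j, ((1 - s) • P4 h d Z σ τ θ + s • permuteParams h d θ σ) m k j * w j
          = ∑ j, (if j ∈ SLimg h d Z σ (m : ℕ) then
              θ m k₀ ((σ (m : ℕ)).symm j) else 0) * w j :=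
            Finset.sum_congr rfl (fun j _ => by rw [hrow j])
        _ = ∑ j ∈ Lset h d Z (m : ℕ), θ m k₀ j * v j :=
            sum_guard_simg hτ (m : ℕ) _ w v hwS
    by_cases hidR : Hid d ((m : ℕ) + 1)
    · by_cases hSL : k ∈ SLimg h d Z σ ((m : ℕ) + 1)
      · -- good row with content σ⁻¹ k
        have heps : eps3 h d Z σ ((m : ℕ) + 1) k = 1 := by
          rw [eps3, if_neg]
          rintro ⟨-, hL, hS⟩
          rcases mem_SLimg_cases hτ hidR hSL with h1 | h1
          · exact hS h1
          · exact (mem_Lset.1 hL) h1.1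
        have hr3 : r3 h d Z σ τ ((m : ℕ) + 1) k = (σ ((m : ℕ) + 1)).symm k := by
          rcases mem_SLimg_cases hτ hidR hSL with h1 | ⟨hz, ht, hinv⟩
          · rw [r3, if_pos ⟨hidR, h1⟩]
          · rw [r3, if_neg (fun hc => Simg_disj_Zs hc.2 hz), r1, if_pos ht, hinv]
        have hrow : ∀ j, ((1 - s) • P4 h d Z σ τ θ + s • permuteParams h d θ σ) m k j
            = (if j ∈ SLimg h d Z σ (m : ℕ) then
                θ m ((σ ((m : ℕ) + 1)).symm k) ((σ (m : ℕ)).symm j) else 0) := by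
          intro j
          rw [hE, heps, hr3]
          by_cases hj : j ∈ SLimg h d Z σ (m : ℕ)
          · simp only [hj, if_true]; ring
          · have hcz := col_zero hθ m (symm_mem_Zs_of_not_SLimg hj)
              ((σ ((m : ℕ) + 1)).symm k)
            simp [hj, hcz]
        rw [main _ hrow, sum_dead_cols hθ m _ v v (fun _ _ => rfl),
          a5, if_pos hidR, if_pos hSL, c5, if_pos ⟨hidR, hSL⟩, one_mul]
      · -- dead row
        have hkW : k ∉ (L2 h d Z σ ((m : ℕ) + 1)).image (τ ((m : ℕ) + 1)) := by
          rw [W5, if_pos hidR] at hk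
          exact hk
        have hp5 : ∀ j', θ m ((σ ((m : ℕ) + 1)).symm k) j' = 0 :=
          row_zero hθ m (symm_mem_Zs_of_not_SLimg hSL)
        have hp4 : ∀ j, eps3 h d Z σ ((m : ℕ) + 1) k *
            (if j ∈ SLimg h d Z σ (m : ℕ) then
              θ m (r3 h d Z σ τ ((m : ℕ) + 1) k) ((σ (m : ℕ)).symm j) else 0) = 0 := by
          intro j
          by_cases hkL : k ∈ Lset h d Z ((m : ℕ) + 1)
          · have heps : eps3 h d Z σ ((m : ℕ) + 1) k = 0 := by
              rw [eps3, if_pos ⟨hidR, hkL, fun hc => hSL (Simg_sub_SLimg hc)⟩]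
            rw [heps, zero_mul]
          · have hkz : k ∈ Zs h d Z ((m : ℕ) + 1) := not_mem_Lset.1 hkL
            have hkt : k ∉ Timg h d Z τ ((m : ℕ) + 1) := by
              intro hc
              exact hSL (timg_mem_SLimg hτ hidR hc hkW)
            have hr3 : r3 h d Z σ τ ((m : ℕ) + 1) k = k := by
              rw [r3, if_neg (fun hc => Simg_disj_Zs hc.2 hkz), r1, if_neg hkt]
            rw [hr3]
            by_cases hj : j ∈ SLimg h d Z σ (m : ℕ) <;>
              simp [hj, row_zero hθ m hkz]
        have hrow : ∀ j,
            ((1 - s) • P4 h d Z σ τ θ + s • permuteParams h d θ σ) m k j = 0 := by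
          intro j
          rw [hE, hp4 j, hp5]
          ring
        simp only [hrow, zero_mul, Finset.sum_const_zero]
        rw [a5, if_pos hidR, if_neg hSL, zero_mul]
    · -- output layer
      have hRd := eq_d_of_nonhid m hidR
      have hσR : σ ((m : ℕ) + 1) = Equiv.refl _ := by rw [hRd]; exact hσd
      have hkz : k ∉ Zs h d Z ((m : ℕ) + 1) := by
        rw [Zs_of_nonhid hidR]; exact Finset.notMem_empty k
      have heps : eps3 h d Z σ ((m : ℕ) + 1) k = 1 := by
        rw [eps3, if_neg (fun hc => hidR hc.1)]
      have hr3 : r3 h d Z σ τ ((m : ℕ) + 1) k = k := by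
        rw [r3, if_neg (fun hc => hidR hc.1), r1_live hτ hkz]
      have hsymm : (σ ((m : ℕ) + 1)).symm k = k := by rw [hσR]; rfl
      have hrow : ∀ j, ((1 - s) • P4 h d Z σ τ θ + s • permuteParams h d θ σ) m k j
          = (if j ∈ SLimg h d Z σ (m : ℕ) then
              θ m k ((σ (m : ℕ)).symm j) else 0) := by
        intro j
        rw [hE, heps, hr3, hsymm]
        by_cases hj : j ∈ SLimg h d Z σ (m : ℕ)
        · simp only [hj, if_true]; ring
        · have hcz := col_zero hθ m (symm_mem_Zs_of_not_SLimg hj) k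
          simp [hj, hcz]
      rw [main _ hrow, sum_dead_cols hθ m _ v v (fun _ _ => rfl),
        a5, if_neg hidR, c5, if_neg (fun hc => hidR hc.1), one_mul]

end Seg5
/-- **Lemma (permuting the hidden units of a half-zeroed parameter in 5 segments).**
If in `θ` at least `⌈hᵢ/2⌉` of the units of every hidden layer `i` are set to zero (both the
corresponding rows of `Aᵢ` and columns of `Aᵢ₊₁` vanish), then for any permutations
`σ i` of the hidden layers (`σ` is the identity on the input and output layers), there is a
continuous piecewise linear path with 5 line segments from `θ` to the parameter obtained by
permuting the hidden units of `θ` accordingly, along which the loss is constantly `L(θ)`. -/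
theorem half_zeroed_permutation_path
    (h : ℕ → ℕ) (d N : ℕ) (hd : 1 ≤ d)
    (l : (Fin (h d) → ℝ) → (Fin (h d) → ℝ) → ℝ)
    (S : Fin N → (Fin (h 0) → ℝ) × (Fin (h d) → ℝ))
    (θ : Params h d)
    (Z : (i : ℕ) → Finset (Fin (h i)))
    (hθ : HalfZeroed h d θ Z)
    (σ : (i : ℕ) → Equiv.Perm (Fin (h i)))
    (hσ0 : σ 0 = Equiv.refl _) (hσd : σ d = Equiv.refl _) :
    ∃ p : Fin 6 → Params h d,
      p 0 = θ ∧ p (Fin.last 5) = permuteParams h d θ σ ∧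
      ∀ (i : Fin 5), ∀ s ∈ Set.Icc (0 : ℝ) 1,
        loss h d N l S ((1 - s) • p i.castSucc + s • p i.succ) = loss h d N l S θ := by
  have hcard : ∀ i, Hid d i → h i ≤ 2 * (Zs h d Z i).card := fun i hi => hid_card hθ hi
  obtain ⟨τ, hτ⟩ := exists_goodTau (σ := σ) hcard
  have lossEq : ∀ A : Params h d, (∀ x, net h d A x = net h d θ x) →
      loss h d N l S A = loss h d N l S θ := by
    intro A hA
    unfold loss
    congr 1
    exact Finset.sum_congr rfl (fun a _ => by rw [hA])
  refine ⟨![θ, P1 h d Z τ θ, P2 h d Z τ θ, P3 h d Z σ τ θ, P4 h d Z σ τ θ,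
    permuteParams h d θ σ], rfl, rfl, ?_⟩
  intro i s hs
  fin_cases i
  · exact lossEq _ (fun x => seg1_net hθ hτ hs.1 x)
  · exact lossEq _ (fun x => seg2_net hθ hτ hs.1 hs.2 x)
  · exact lossEq _ (fun x => seg3_net hθ hτ s x)
  · exact lossEq _ (fun x => seg4_net hθ hτ hσ0 s x)
  · exact lossEq _ (fun x => seg5_net hθ hτ hσ0 hσd s x)
end
end

section
/- Let θ and θ′ be two parameters of a d-layer fully connected ReLU network such that in both, in each hidden layer i, at least ⌈h_i/2⌉ of the units are set to zero (both the corresponding rows of A_i and the corresponding columns of A_{i+1} are zero). Then there exists a continuous, piecewise-linear path π : [0,1] → Θ consisting of 8 line segments with π(0) = θ and π(1) = θ′ such that L(f_{π(t)}) ≤ max{L(f_θ), L(f_{θ′})} for all t ∈ [0,1]. -/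
open scoped BigOperators

noncomputable section

/-! ### Auxiliary machinery -/

/-- ℕ-indexed families of matrices. -/
abbrev NParams (h : ℕ → ℕ) := (m : ℕ) → Matrix (Fin (h (m+1))) (Fin (h m)) ℝ

lemma net_param_congr (h : ℕ → ℕ) (t : ℕ) (θa θb : Params h t) (x) (hab : θa = θb) :
    net h t θa x = net h t θb x := by rw [hab]

lemma net_succ_succ (h : ℕ → ℕ) (t : ℕ) (f : NParams h) (x) :
    net h (t+2) (fun i : Fin (t+2) => f i) x =
      (f (t+1)).mulVec (relu (net h (t+1) (fun i : Fin (t+1) => f i) x)) := rfl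

/-- Lemma A: changing "garbage" rows (rows whose units have zero outgoing weights)
does not change the network values outside the garbage sets. -/
theorem netA (h : ℕ → ℕ) (θ1 θ2 : NParams h) (G : (m : ℕ) → Set (Fin (h m)))
    (hrow : ∀ m j, j ∉ G (m+1) → ∀ k, θ1 m j k = θ2 m j k)
    (hcol : ∀ m j, j ∉ G (m+1) → ∀ k ∈ G m, θ2 m j k = 0) :
    ∀ t x j, j ∉ G t →
      net h t (fun i : Fin t => θ1 i) x j = net h t (fun i : Fin t => θ2 i) x j
  | 0, x, j, hj => rfl
  | 1, x, j, hj => by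
      show (θ1 0).mulVec x j = (θ2 0).mulVec x j
      simp only [Matrix.mulVec, dotProduct]
      exact Finset.sum_congr rfl fun k _ => by rw [hrow 0 j hj k]
  | (t+2), x, j, hj => by
      rw [net_succ_succ, net_succ_succ]
      simp only [Matrix.mulVec, dotProduct]
      refine Finset.sum_congr rfl fun k _ => ?_
      rw [hrow (t+1) j hj k]
      by_cases hk : k ∈ G (t+1)
      · rw [hcol (t+1) j hj k hk]; ring
      · congr 1
        show max _ 0 = max _ 0
        rw [netA h θ1 θ2 G hrow hcol (t+1) x k hk]

/-- Lemma E: permutation invariance of the network. -/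
theorem netE (h : ℕ → ℕ) (f : NParams h) (p : (m : ℕ) → Fin (h m) → Fin (h m))
    (hbij : ∀ m, Function.Bijective (p m)) (hp0 : ∀ k, p 0 k = k) :
    ∀ t x j,
      net h t (fun i : Fin t => fun a b => f i (p ((i : ℕ)+1) a) (p (i : ℕ) b)) x j
        = net h t (fun i : Fin t => f i) x (p t j)
  | 0, x, j => by
      show x j = x (p 0 j)
      rw [hp0]
  | 1, x, j => by
      show (Matrix.mulVec _ x) j = (Matrix.mulVec _ x) (p 1 j)
      simp only [Matrix.mulVec, dotProduct]
      exact Finset.sum_congr rfl fun k _ => by rw [hp0]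
  | (t+2), x, j => by
      show (Matrix.mulVec (fun a b => f (t+1) (p (t+2) a) (p (t+1) b))
          (relu (net h (t+1) (fun i : Fin (t+1) => fun a b => f i (p ((i:ℕ)+1) a) (p (i:ℕ) b)) x))) j
        = (Matrix.mulVec (f (t+1)) (relu (net h (t+1) (fun i : Fin (t+1) => f i) x))) (p (t+2) j)
      simp only [Matrix.mulVec, dotProduct]
      have IH := netE h f p hbij hp0 (t+1) x
      have hrel : ∀ k, relu (net h (t+1) (fun i : Fin (t+1) => fun a b => f i (p ((i:ℕ)+1) a) (p (i:ℕ) b)) x) k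
          = relu (net h (t+1) (fun i : Fin (t+1) => f i) x) (p (t+1) k) := by
        intro k
        simp only [relu]
        rw [IH k]
      calc ∑ k, f (t+1) (p (t+2) j) (p (t+1) k) *
              relu (net h (t+1) (fun i : Fin (t+1) => fun a b => f i (p ((i:ℕ)+1) a) (p (i:ℕ) b)) x) k
          = ∑ k, (fun c => f (t+1) (p (t+2) j) c * relu (net h (t+1) (fun i : Fin (t+1) => f i) x) c) (p (t+1) k) := by
            refine Finset.sum_congr rfl fun k _ => ?_
            rw [hrel k]
        _ = ∑ c, f (t+1) (p (t+2) j) c * relu (net h (t+1) (fun i : Fin (t+1) => f i) x) c :=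
            (hbij (t+1)).sum_comp (fun c => f (t+1) (p (t+2) j) c * relu (net h (t+1) (fun i : Fin (t+1) => f i) x) c)

def qmap (h : ℕ → ℕ) (p : (m : ℕ) → Fin (h m) → Fin (h m)) (M : (m : ℕ) → Finset (Fin (h m)))
    (m : ℕ) (j : Fin (h m)) : Fin (h m) :=
  if j ∈ M m then j else p m j

def wseg (h : ℕ → ℕ) (f : NParams h) (p : (m : ℕ) → Fin (h m) → Fin (h m))
    (M : (m : ℕ) → Finset (Fin (h m))) (s : ℝ) : NParams h :=
  fun m j k => (1-s) * f m (qmap h p M (m+1) j) (p m k) + s * f m (qmap h p M (m+1) j) k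

/-- Lemma G: transferring outgoing weights between duplicated units preserves the network. -/
theorem netG (h : ℕ → ℕ) (f : NParams h) (p : (m : ℕ) → Fin (h m) → Fin (h m))
    (M W : (m : ℕ) → Finset (Fin (h m)))
    (hinv : ∀ m, Function.Involutive (p m))
    (hpM : ∀ m, ∀ k ∈ M m, p m k ∈ W m)
    (hpW : ∀ m, ∀ k ∈ W m, p m k ∈ M m)
    (hdisj : ∀ m, Disjoint (M m) (W m))
    (hpid : ∀ m k, k ∉ M m → k ∉ W m → p m k = k)
    (hcolW : ∀ m j, ∀ k ∈ W m, f m j k = 0)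
    (hM0 : M 0 = ∅) (hW0 : W 0 = ∅) (s : ℝ) :
    ∀ t x,
      (∀ j, net h t (fun i : Fin t => wseg h f p M s i) x j
            = net h t (fun i : Fin t => wseg h f p M 1 i) x j) ∧
      (∀ j ∈ W t, net h t (fun i : Fin t => wseg h f p M s i) x j
            = net h t (fun i : Fin t => wseg h f p M s i) x (p t j))
  | 0, x => by
      constructor
      · intro j; rfl
      · intro j hj; rw [hW0] at hj; exact absurd hj (Finset.notMem_empty j)
  | 1, x => by
      have hrow1 : ∀ (s' : ℝ) j k, wseg h f p M s' 0 j k = f 0 (qmap h p M 1 j) k := by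
        intro s' j k
        have hk : p 0 k = k := hpid 0 k (by simp [hM0]) (by simp [hW0])
        simp only [wseg, hk]; ring
      constructor
      · intro j
        show (Matrix.mulVec _ x) j = (Matrix.mulVec _ x) j
        simp only [Matrix.mulVec, dotProduct]
        exact Finset.sum_congr rfl fun k _ => by rw [hrow1 s, hrow1 1]
      · intro j hj
        have hq1 : qmap h p M 1 j = p 1 j := by
          have : j ∉ M 1 := Finset.disjoint_right.mp (hdisj 1) hj
          simp [qmap, this]
        have hq2 : qmap h p M 1 (p 1 j) = p 1 j := by
          have : p 1 j ∈ M 1 := hpW 1 j hj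
          simp [qmap, this]
        show (Matrix.mulVec _ x) j = (Matrix.mulVec _ x) (p 1 j)
        simp only [Matrix.mulVec, dotProduct]
        refine Finset.sum_congr rfl fun k _ => ?_
        simp only [wseg, hq1, hq2]
  | (t+2), x => by
      have IH := netG h f p M W hinv hpM hpW hdisj hpid hcolW hM0 hW0 s (t+1) x
      have IHB := netG h f p M W hinv hpM hpW hdisj hpid hcolW hM0 hW0 1 (t+1) x
      set A := net h (t+1) (fun i : Fin (t+1) => wseg h f p M s i) x with hA
      set B := net h (t+1) (fun i : Fin (t+1) => wseg h f p M 1 i) x with hB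
      have hrowdup : ∀ (s' : ℝ) (j : Fin (h (t+2))), j ∈ W (t+2) →
          ∀ k, wseg h f p M s' (t+1) j k = wseg h f p M s' (t+1) (p (t+2) j) k := by
        intro s' j hj k
        have hq1 : qmap h p M (t+2) j = p (t+2) j := by
          have : j ∉ M (t+2) := Finset.disjoint_right.mp (hdisj (t+2)) hj
          simp [qmap, this]
        have hq2 : qmap h p M (t+2) (p (t+2) j) = p (t+2) j := by
          have : p (t+2) j ∈ M (t+2) := hpW (t+2) j hj
          simp [qmap, this]
        simp only [wseg, hq1, hq2]
      constructor
      · intro j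
        rw [net_succ_succ, net_succ_succ]
        simp only [Matrix.mulVec, dotProduct, ← hA, ← hB]
        have hAB : A = B := funext IH.1
        have hBp : ∀ k, relu B k = relu B (p (t+1) k) := by
          intro k
          by_cases hk : k ∈ W (t+1)
          · simp only [relu]; rw [IHB.2 k hk]
          · by_cases hk' : k ∈ M (t+1)
            · have h1 : p (t+1) k ∈ W (t+1) := hpM (t+1) k hk'
              simp only [relu]
              rw [IHB.2 (p (t+1) k) h1, hinv (t+1) k]
            · rw [hpid (t+1) k hk' hk]
        have key : ∀ (c : Fin (h (t+1)) → ℝ), (∀ k, c k = c (p (t+1) k)) →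
            ∀ (j' : Fin (h (t+2))),
            ∑ k, f (t+1) (qmap h p M (t+2) j') (p (t+1) k) * c k
              = ∑ k, f (t+1) (qmap h p M (t+2) j') k * c k := by
          intro c hc j'
          calc ∑ k, f (t+1) (qmap h p M (t+2) j') (p (t+1) k) * c k
              = ∑ k, (fun k' => f (t+1) (qmap h p M (t+2) j') k' * c k') (p (t+1) k) := by
                refine Finset.sum_congr rfl fun k _ => ?_
                show _ = f (t+1) (qmap h p M (t+2) j') (p (t+1) k) * c (p (t+1) k)
                rw [← hc k]
            _ = ∑ k, f (t+1) (qmap h p M (t+2) j') k * c k :=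
                (hinv (t+1)).bijective.sum_comp
                  (fun k' => f (t+1) (qmap h p M (t+2) j') k' * c k')
        calc ∑ k, wseg h f p M s (t+1) j k * relu A k
            = ∑ k, wseg h f p M s (t+1) j k * relu B k := by rw [hAB]
          _ = (1-s) * (∑ k, f (t+1) (qmap h p M (t+2) j) (p (t+1) k) * relu B k)
              + s * (∑ k, f (t+1) (qmap h p M (t+2) j) k * relu B k) := by
              rw [Finset.mul_sum, Finset.mul_sum, ← Finset.sum_add_distrib]
              exact Finset.sum_congr rfl fun k _ => by simp only [wseg]; ring
          _ = ∑ k, f (t+1) (qmap h p M (t+2) j) k * relu B k := by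
              rw [key (fun k => relu B k) hBp j]; ring
          _ = ∑ k, wseg h f p M 1 (t+1) j k * relu B k := by
              refine Finset.sum_congr rfl fun k _ => ?_
              simp only [wseg]; ring
      · intro j hj
        rw [net_succ_succ]
        simp only [Matrix.mulVec, dotProduct]
        exact Finset.sum_congr rfl fun k _ => by rw [hrowdup s j hj k]

/-- Construction of the swap involution. -/
lemma existsSwapAux {α : Type*} [Fintype α] [DecidableEq α] (Ms S : Finset α)
    (hcard : Ms.card ≤ S.card) (hdisj : Disjoint Ms S) :
    ∃ (W : Finset α) (p : α → α), W ⊆ S ∧ (∀ k ∈ Ms, p k ∈ W) ∧ (∀ k ∈ W, p k ∈ Ms) ∧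
      (∀ k, k ∉ Ms → k ∉ W → p k = k) ∧ Function.Involutive p := by
  obtain ⟨W, hWS, hWcard⟩ := Finset.exists_subset_card_eq hcard
  have hMW : Disjoint Ms W := hdisj.mono_right hWS
  have e : (Ms : Finset α) ≃ (W : Finset α) := Finset.equivOfCardEq hWcard.symm
  refine ⟨W, fun k => if hk : k ∈ Ms then (e ⟨k, hk⟩ : α) else if hk' : k ∈ W then (e.symm ⟨k, hk'⟩ : α) else k, hWS, ?_, ?_, ?_, ?_⟩
  · intro k hk; simp only [dif_pos hk]; exact (e ⟨k, hk⟩).2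
  · intro k hk
    have hk2 : k ∉ Ms := Finset.disjoint_right.mp hMW hk
    simp only [dif_neg hk2, dif_pos hk]; exact (e.symm ⟨k, hk⟩).2
  · intro k hk hk'; simp only [dif_neg hk, dif_neg hk']
  · intro k
    by_cases hk : k ∈ Ms
    · simp only [dif_pos hk]
      have h1 : (e ⟨k, hk⟩ : α) ∈ W := (e ⟨k, hk⟩).2
      have h2 : (e ⟨k, hk⟩ : α) ∉ Ms := Finset.disjoint_right.mp hMW h1
      simp only [dif_neg h2, dif_pos h1, Subtype.coe_eta, Equiv.symm_apply_apply]
    · by_cases hk' : k ∈ W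
      · simp only [dif_neg hk, dif_pos hk']
        have h1 : (e.symm ⟨k, hk'⟩ : α) ∈ Ms := (e.symm ⟨k, hk'⟩).2
        simp only [dif_pos h1, Subtype.coe_eta, Equiv.apply_symm_apply]
      · simp only [dif_neg hk, dif_neg hk']

lemma loss_congr (h : ℕ → ℕ) (d N : ℕ) (l) (S) (θ1 θ2 : Params h d)
    (hnet : ∀ x, net h d θ1 x = net h d θ2 x) :
    loss h d N l S θ1 = loss h d N l S θ2 := by
  unfold loss
  congr 1
  exact Finset.sum_congr rfl fun a _ => by rw [hnet]

lemma loss_le_max_of_combo (h : ℕ → ℕ) (d N : ℕ)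
    (l : (Fin (h d) → ℝ) → (Fin (h d) → ℝ) → ℝ)
    (hl : ∀ y, ConvexOn ℝ Set.univ (l y)) (S)
    (θa θb P : Params h d) (s : ℝ) (hs0 : 0 ≤ s) (hs1 : s ≤ 1)
    (hP : ∀ x, net h d P x = (1-s) • net h d θa x + s • net h d θb x) :
    loss h d N l S P ≤ max (loss h d N l S θa) (loss h d N l S θb) := by
  have key : loss h d N l S P ≤ (1-s) * loss h d N l S θa + s * loss h d N l S θb := by
    unfold loss
    have hsum : (∑ a, l (S a).2 (net h d P (S a).1))
        ≤ (1-s) * (∑ a, l (S a).2 (net h d θa (S a).1))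
          + s * (∑ a, l (S a).2 (net h d θb (S a).1)) := by
      rw [Finset.mul_sum, Finset.mul_sum, ← Finset.sum_add_distrib]
      refine Finset.sum_le_sum fun a _ => ?_
      rw [hP]
      have := (hl (S a).2).2 (Set.mem_univ (net h d θa (S a).1))
        (Set.mem_univ (net h d θb (S a).1)) (by linarith : (0:ℝ) ≤ 1 - s) hs0 (by ring)
      simpa [smul_eq_mul] using this
    rw [div_eq_mul_inv, div_eq_mul_inv, div_eq_mul_inv]
    have hinv : (0:ℝ) ≤ ((N:ℝ))⁻¹ := inv_nonneg.mpr (Nat.cast_nonneg N)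
    calc (∑ a, l (S a).2 (net h d P (S a).1)) * ((N:ℝ))⁻¹
        ≤ ((1-s) * (∑ a, l (S a).2 (net h d θa (S a).1))
            + s * (∑ a, l (S a).2 (net h d θb (S a).1))) * ((N:ℝ))⁻¹ :=
          mul_le_mul_of_nonneg_right hsum hinv
      _ = (1-s) * ((∑ a, l (S a).2 (net h d θa (S a).1)) * ((N:ℝ))⁻¹)
            + s * ((∑ a, l (S a).2 (net h d θb (S a).1)) * ((N:ℝ))⁻¹) := by ring
  have h1 : loss h d N l S θa ≤ max (loss h d N l S θa) (loss h d N l S θb) := le_max_left _ _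
  have h2 : loss h d N l S θb ≤ max (loss h d N l S θa) (loss h d N l S θb) := le_max_right _ _
  nlinarith [mul_le_mul_of_nonneg_left h1 (by linarith : (0:ℝ) ≤ 1 - s),
    mul_le_mul_of_nonneg_left h2 hs0]

lemma combo_self {E : Type*} [AddCommGroup E] [Module ℝ E] (a : E) (s : ℝ) :
    (1-s) • a + s • a = a := by rw [← add_smul]; norm_num

/-- ℕ-indexed version of a parameter. -/
def nzP (h : ℕ → ℕ) (d : ℕ) (θ : Params h d) : NParams h :=
  fun m => if hm : m < d then θ ⟨m, hm⟩ else 0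

lemma nzP_eq (h : ℕ → ℕ) (d : ℕ) (θ : Params h d) :
    (fun i : Fin d => nzP h d θ i) = θ := by
  funext i
  simp [nzP, i.isLt]

/-- The relocation target set. -/
def MSdef (h : ℕ → ℕ) (d : ℕ) (Z Z' : (i : ℕ) → Finset (Fin (h i))) :
    (m : ℕ) → Finset (Fin (h m)) :=
  fun m => if 1 ≤ m ∧ m < d then ((Z' m)ᶜ \ Z m) else ∅
/-- **Lemma (connecting two half-zeroed parameters with 8 segments).**
If in each of `θ` and `θ'` at least `⌈hᵢ/2⌉` of the units of every hidden layer `i` are set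
to zero (both the corresponding rows of `Aᵢ` and columns of `Aᵢ₊₁` vanish), then `θ` and `θ'`
are connected by a continuous piecewise linear path with 8 line segments along which the loss
never exceeds `max (L θ) (L θ')`. -/
theorem half_zeroed_connected
    (h : ℕ → ℕ) (d N : ℕ) (hd : 1 ≤ d)
    (l : (Fin (h d) → ℝ) → (Fin (h d) → ℝ) → ℝ)
    (hl : ∀ y, ConvexOn ℝ Set.univ (l y))
    (S : Fin N → (Fin (h 0) → ℝ) × (Fin (h d) → ℝ))
    (θ θ' : Params h d)
    (Z Z' : (i : ℕ) → Finset (Fin (h i)))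
    (hθ : HalfZeroed h d θ Z) (hθ' : HalfZeroed h d θ' Z') :
    PiecewiseLinearConn 8 (loss h d N l S) θ θ'
      (max (loss h d N l S θ) (loss h d N l S θ')) := by
  classical
  rcases Nat.lt_or_ge d 2 with hd2 | hd2
  · -- d = 1 : the network is linear in the parameters
    have hd1 : d = 1 := by omega
    subst hd1
    refine ⟨fun i => if (i : ℕ) < 8 then θ else θ', by norm_num, by norm_num [Fin.last], ?_⟩
    intro i s hs
    obtain ⟨hs0, hs1⟩ := hs
    by_cases hi : (i : ℕ) < 7
    · have h1 : ((i.castSucc : Fin 9) : ℕ) < 8 := by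
        simp only [Fin.coe_castSucc]; omega
      have h2 : ((i.succ : Fin 9) : ℕ) < 8 := by
        simp only [Fin.val_succ]; omega
      have e1 : (fun i : Fin 9 => if (i : ℕ) < 8 then θ else θ') i.castSucc = θ := if_pos h1
      have e2 : (fun i : Fin 9 => if (i : ℕ) < 8 then θ else θ') i.succ = θ := if_pos h2
      rw [e1, e2, combo_self]
      exact le_max_left _ _
    · have h1 : ((i.castSucc : Fin 9) : ℕ) < 8 := by
        simp only [Fin.coe_castSucc]; omega
      have h2 : ¬ ((i.succ : Fin 9) : ℕ) < 8 := by
        simp only [Fin.val_succ]; omega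
      have e1 : (fun i : Fin 9 => if (i : ℕ) < 8 then θ else θ') i.castSucc = θ := if_pos h1
      have e2 : (fun i : Fin 9 => if (i : ℕ) < 8 then θ else θ') i.succ = θ' := if_neg h2
      rw [e1, e2]
      refine loss_le_max_of_combo h 1 N l hl S θ θ' _ s hs0 hs1 ?_
      intro x
      show (((1-s) • θ + s • θ') ⟨0, Nat.zero_lt_one⟩).mulVec x = _
      have : ((1-s) • θ + s • θ') ⟨0, Nat.zero_lt_one⟩
          = (1-s) • θ ⟨0, Nat.zero_lt_one⟩ + s • θ' ⟨0, Nat.zero_lt_one⟩ := rfl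
      rw [this, Matrix.add_mulVec, Matrix.smul_mulVec, Matrix.smul_mulVec]
      rfl
  · -- d ≥ 2
    obtain ⟨e, rfl⟩ : ∃ e, d = e + 2 := ⟨d - 2, by omega⟩
    -- basic zeroing facts
    have hrowZ : ∀ m, m + 1 < e+2 → ∀ j ∈ Z (m+1), ∀ k, nzP h (e+2) θ m j k = 0 := by
      intro m hm j hj k
      have h2 : m < e + 2 := by omega
      have := ((hθ m hm).2 j hj).1 k
      simpa [nzP, h2] using this
    have hrowZ' : ∀ m, m + 1 < e+2 → ∀ j ∈ Z' (m+1), ∀ k, nzP h (e+2) θ' m j k = 0 := by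
      intro m hm j hj k
      have h2 : m < e + 2 := by omega
      have := ((hθ' m hm).2 j hj).1 k
      simpa [nzP, h2] using this
    have hcolZ : ∀ m, 1 ≤ m → m < e+2 → ∀ k ∈ Z m, ∀ j, nzP h (e+2) θ m j k = 0 := by
      intro m h1 h2 k hk j
      obtain ⟨m', rfl⟩ : ∃ m', m = m' + 1 := ⟨m - 1, by omega⟩
      have := ((hθ m' h2).2 k hk).2 j
      simpa [nzP, h2] using this
    have hcolZ' : ∀ m, 1 ≤ m → m < e+2 → ∀ k ∈ Z' m, ∀ j, nzP h (e+2) θ' m j k = 0 := by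
      intro m h1 h2 k hk j
      obtain ⟨m', rfl⟩ : ∃ m', m = m' + 1 := ⟨m - 1, by omega⟩
      have := ((hθ' m' h2).2 k hk).2 j
      simpa [nzP, h2] using this
    have hcardZ : ∀ m, 1 ≤ m → m < e+2 → (h m + 1)/2 ≤ (Z m).card := by
      intro m h1 h2
      obtain ⟨m', rfl⟩ : ∃ m', m = m' + 1 := ⟨m - 1, by omega⟩
      exact (hθ m' h2).1
    have hcardZ' : ∀ m, 1 ≤ m → m < e+2 → (h m + 1)/2 ≤ (Z' m).card := by
      intro m h1 h2
      obtain ⟨m', rfl⟩ : ∃ m', m = m' + 1 := ⟨m - 1, by omega⟩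
      exact (hθ' m' h2).1
    -- the relocation sets
    have hMSin : ∀ m, 1 ≤ m ∧ m < e+2 → MSdef h (e+2) Z Z' m = (Z' m)ᶜ \ Z m :=
      fun m hm => if_pos hm
    have hMSout : ∀ m, ¬(1 ≤ m ∧ m < e+2) → MSdef h (e+2) Z Z' m = ∅ :=
      fun m hm => if_neg hm
    have hMScard : ∀ m, (MSdef h (e+2) Z Z' m).card ≤ (Z m ∩ Z' m).card := by
      intro m
      by_cases hm : 1 ≤ m ∧ m < e+2
      · rw [hMSin m hm]
        have h1 := hcardZ m hm.1 hm.2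
        have h2 := hcardZ' m hm.1 hm.2
        have e1 : (Z' m)ᶜ \ Z m = (Z m ∪ Z' m)ᶜ := by
          ext k
          simp only [Finset.mem_sdiff, Finset.mem_compl, Finset.mem_union]
          tauto
        rw [e1]
        have c1 : ((Z m ∪ Z' m)ᶜ).card = Fintype.card (Fin (h m)) - (Z m ∪ Z' m).card :=
          Finset.card_compl _
        have c2 := Finset.card_union_add_card_inter (Z m) (Z' m)
        have c3 : (Z m ∪ Z' m).card ≤ Fintype.card (Fin (h m)) := Finset.card_le_univ _
        have c4 : Fintype.card (Fin (h m)) = h m := Fintype.card_fin _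
        omega
      · rw [hMSout m hm]; simp
    have hMSdisjZ : ∀ m, Disjoint (MSdef h (e+2) Z Z' m) (Z m ∩ Z' m) := by
      intro m
      by_cases hm : 1 ≤ m ∧ m < e+2
      · rw [hMSin m hm, Finset.disjoint_left]
        intro k hk hk'
        exact (Finset.mem_sdiff.mp hk).2 (Finset.mem_inter.mp hk').1
      · rw [hMSout m hm]; exact Finset.disjoint_empty_left _
    have hex : ∀ m, ∃ (W : Finset (Fin (h m))) (p : Fin (h m) → Fin (h m)),
        W ⊆ Z m ∩ Z' m ∧ (∀ k ∈ MSdef h (e+2) Z Z' m, p k ∈ W) ∧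
        (∀ k ∈ W, p k ∈ MSdef h (e+2) Z Z' m) ∧
        (∀ k, k ∉ MSdef h (e+2) Z Z' m → k ∉ W → p k = k) ∧ Function.Involutive p :=
      fun m => existsSwapAux _ _ (hMScard m) (hMSdisjZ m)
    choose Wf pf hWsub hpM hpW hpid hinv using hex
    have hWZ : ∀ m k, k ∈ Wf m → k ∈ Z m ∧ k ∈ Z' m :=
      fun m k hk => Finset.mem_inter.mp (hWsub m hk)
    have hMSZ : ∀ m k, k ∈ MSdef h (e+2) Z Z' m →
        (1 ≤ m ∧ m < e+2) ∧ k ∉ Z' m ∧ k ∉ Z m := by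
      intro m k hk
      by_cases hm : 1 ≤ m ∧ m < e+2
      · rw [hMSin m hm] at hk
        obtain ⟨hk1, hk2⟩ := Finset.mem_sdiff.mp hk
        exact ⟨hm, Finset.mem_compl.mp hk1, hk2⟩
      · rw [hMSout m hm] at hk
        exact absurd hk (Finset.notMem_empty k)
    have hWout : ∀ m, ¬(1 ≤ m ∧ m < e+2) → Wf m = ∅ := by
      intro m hm
      rw [Finset.eq_empty_iff_forall_notMem]
      intro k hk
      have := hpW m k hk
      rw [hMSout m hm] at this
      exact absurd this (Finset.notMem_empty _)
    have hpidout : ∀ m, ¬(1 ≤ m ∧ m < e+2) → ∀ k, pf m k = k := by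
      intro m hm k
      refine hpid m k ?_ ?_
      · rw [hMSout m hm]; exact Finset.notMem_empty _
      · rw [hWout m hm]; exact Finset.notMem_empty _
    have hp0 : ∀ k, pf 0 k = k := hpidout 0 (by omega)
    have hpd : ∀ k, pf (e+2) k = k := hpidout (e+2) (by omega)
    have hpbij : ∀ m, Function.Bijective (pf m) := fun m => (hinv m).bijective
    have hdisjMW : ∀ m, Disjoint (MSdef h (e+2) Z Z' m) (Wf m) := by
      intro m
      rw [Finset.disjoint_left]
      intro k hk hk'
      exact (hMSZ m k hk).2.2 (hWZ m k hk').1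
    have hθ'W : ∀ m (j : Fin (h (m+1))), ∀ k ∈ Wf m, nzP h (e+2) θ' m j k = 0 := by
      intro m j k hk
      by_cases hm : 1 ≤ m ∧ m < e+2
      · exact hcolZ' m hm.1 hm.2 k (hWZ m k hk).2 j
      · rw [hWout m hm] at hk
        exact absurd hk (Finset.notMem_empty _)
    have hGZ1 : ∀ m, 1 ≤ m → m < e+2 → ∀ k, pf m k ∉ Z' m → k ∈ Z m := by
      intro m h1 h2 k hk
      by_cases hkM : k ∈ MSdef h (e+2) Z Z' m
      · exact absurd (hWZ m _ (hpM m k hkM)).2 hk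
      · by_cases hkW : k ∈ Wf m
        · exact (hWZ m k hkW).1
        · rw [hpid m k hkM hkW] at hk
          by_contra hkZ
          refine hkM ?_
          rw [hMSin m ⟨h1, h2⟩]
          exact Finset.mem_sdiff.mpr ⟨Finset.mem_compl.mpr hk, hkZ⟩
    have hGZ2 : ∀ m, 1 ≤ m → m < e+2 → ∀ k, k ∉ Z m → pf m k ∈ Z' m := by
      intro m h1 h2 k hk
      by_cases hkM : k ∈ MSdef h (e+2) Z Z' m
      · exact (hWZ m _ (hpM m k hkM)).2
      · have hkW : k ∉ Wf m := fun hw => hk (hWZ m k hw).1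
        rw [hpid m k hkM hkW]
        by_contra hk'
        refine hkM ?_
        rw [hMSin m ⟨h1, h2⟩]
        exact Finset.mem_sdiff.mpr ⟨Finset.mem_compl.mpr hk', hk⟩
    -- the path vertex families (ℕ-indexed)
    set MS := MSdef h (e+2) Z Z' with hMSdef
    set c1f : NParams h := fun m => fun a b => nzP h (e+2) θ' m (pf (m+1) a) (pf m b) with hc1f
    set c1af : NParams h := fun m => fun a b =>
      nzP h (e+2) θ' m (qmap h pf MS (m+1) a) (pf m b) with hc1af
    set c1bf : NParams h := fun m => fun a b =>
      nzP h (e+2) θ' m (qmap h pf MS (m+1) a) b with hc1bf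
    set v1f : NParams h := fun m => fun a b =>
      if m + 1 = e + 2 then nzP h (e+2) θ m a b else nzP h (e+2) θ m a b + c1f m a b with hv1f
    set v2f : NParams h := fun m => fun a b =>
      if m + 1 = e + 2 then c1f m a b else nzP h (e+2) θ m a b + c1f m a b with hv2f
    -- out of range : everything vanishes
    have hnzout : ∀ (ψ : Params h (e+2)) m (a : Fin (h (m+1))) (b : Fin (h m)), ¬ m < e + 2 →
        nzP h (e+2) ψ m a b = 0 := by
      intro ψ m a b hm
      simp [nzP, hm]
    -- NA1 : the first segment keeps the network equal to that of θ
    have NA1 : ∀ (s' : ℝ) x j,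
        net h (e+2) (fun i : Fin (e+2) => (fun m => fun (a : Fin (h (m+1))) (b : Fin (h m)) =>
            (1-s') * nzP h (e+2) θ m a b + s' * v1f m a b) (i : ℕ)) x j
          = net h (e+2) (fun i : Fin (e+2) => nzP h (e+2) θ (i : ℕ)) x j := by
      intro s' x j
      refine netA h (fun m => fun (a : Fin (h (m+1))) (b : Fin (h m)) =>
          (1-s') * nzP h (e+2) θ m a b + s' * v1f m a b) (nzP h (e+2) θ)
        (fun m => if 1 ≤ m ∧ m < e+2 then {j | pf m j ∉ Z' m} else ∅) ?_ ?_ (e+2) x j ?_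
      · intro m j' hj' k
        by_cases htop : m + 1 = e + 2
        · simp only [hv1f, if_pos htop]; ring
        · by_cases hm : m + 1 < e + 2
          · have hin : 1 ≤ m + 1 ∧ m + 1 < e + 2 := ⟨by omega, hm⟩
            simp only [if_pos hin, Set.mem_setOf_eq, not_not] at hj'
            have hjZ : pf (m+1) j' ∈ Z' (m+1) := hj'
            have hc0 : c1f m j' k = 0 := by
              simp only [hc1f]
              exact hrowZ' m hm _ hjZ _
            simp only [hv1f, if_neg htop, hc0]; ring
          · have hm2 : ¬ m < e + 2 := by omega
            simp only [hv1f, if_neg htop, hc1f, hnzout θ m j' k hm2,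
              hnzout θ' m (pf (m+1) j') (pf m k) hm2]
            ring
      · intro m j' hj' k hk
        by_cases hm : 1 ≤ m ∧ m < e+2
        · simp only [if_pos hm, Set.mem_setOf_eq] at hk
          have hkZ : k ∈ Z m := hGZ1 m hm.1 hm.2 k hk
          exact hcolZ m hm.1 hm.2 k hkZ j'
        · simp only [if_neg hm] at hk
          exact absurd hk (Set.notMem_empty k)
      · have hni : ¬(1 ≤ e+2 ∧ e+2 < e+2) := by omega
        simp only [if_neg hni]
        exact Set.notMem_empty j
    -- NA2 : the v2f ↔ c1f deformation
    have NA2 : ∀ (s' : ℝ) x j,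
        net h (e+2) (fun i : Fin (e+2) => (fun m => fun (a : Fin (h (m+1))) (b : Fin (h m)) =>
            (1-s') * v2f m a b + s' * c1f m a b) (i : ℕ)) x j
          = net h (e+2) (fun i : Fin (e+2) => c1f (i : ℕ)) x j := by
      intro s' x j
      refine netA h (fun m => fun (a : Fin (h (m+1))) (b : Fin (h m)) =>
          (1-s') * v2f m a b + s' * c1f m a b) c1f
        (fun m => if 1 ≤ m ∧ m < e+2 then {j | j ∉ Z m} else ∅) ?_ ?_ (e+2) x j ?_
      · intro m j' hj' k
        by_cases htop : m + 1 = e + 2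
        · simp only [hv2f, if_pos htop]; ring
        · by_cases hm : m + 1 < e + 2
          · have hin : 1 ≤ m + 1 ∧ m + 1 < e + 2 := ⟨by omega, hm⟩
            simp only [if_pos hin, Set.mem_setOf_eq, not_not] at hj'
            have hz : nzP h (e+2) θ m j' k = 0 := hrowZ m hm j' hj' k
            simp only [hv2f, if_neg htop, hz]; ring
          · have hm2 : ¬ m < e + 2 := by omega
            simp only [hv2f, if_neg htop, hc1f, hnzout θ m j' k hm2,
              hnzout θ' m (pf (m+1) j') (pf m k) hm2]
            ring
      · intro m j' hj' k hk
        by_cases hm : 1 ≤ m ∧ m < e+2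
        · simp only [if_pos hm, Set.mem_setOf_eq] at hk
          have hkZ' : pf m k ∈ Z' m := hGZ2 m hm.1 hm.2 k hk
          simp only [hc1f]
          exact hcolZ' m hm.1 hm.2 _ hkZ' _
        · simp only [if_neg hm] at hk
          exact absurd hk (Set.notMem_empty k)
      · have hni : ¬(1 ≤ e+2 ∧ e+2 < e+2) := by omega
        simp only [if_neg hni]
        exact Set.notMem_empty j
    -- NA3 : the c1f ↔ c1af deformation
    have NA3 : ∀ (s' : ℝ) x j,
        net h (e+2) (fun i : Fin (e+2) => (fun m => fun (a : Fin (h (m+1))) (b : Fin (h m)) =>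
            (1-s') * c1f m a b + s' * c1af m a b) (i : ℕ)) x j
          = net h (e+2) (fun i : Fin (e+2) => c1f (i : ℕ)) x j := by
      intro s' x j
      refine netA h (fun m => fun (a : Fin (h (m+1))) (b : Fin (h m)) =>
          (1-s') * c1f m a b + s' * c1af m a b) c1f
        (fun m => {j | j ∈ MS m}) ?_ ?_ (e+2) x j ?_
      · intro m j' hj' k
        simp only [Set.mem_setOf_eq] at hj'
        have hq : qmap h pf MS (m+1) j' = pf (m+1) j' := by
          simp [qmap, hj']
        simp only [hc1af, hc1f, hq]
        ring
      · intro m j' hj' k hk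
        simp only [Set.mem_setOf_eq] at hk
        have hw : pf m k ∈ Wf m := hpM m k hk
        simp only [hc1f]
        exact hθ'W m _ _ hw
      · simp only [Set.mem_setOf_eq]
        rw [hMSout (e+2) (by omega)]
        exact Finset.notMem_empty j
    -- NA4 : the c1af ↔ c1bf deformation (Lemma G)
    have NA4 : ∀ (s' : ℝ) x j,
        net h (e+2) (fun i : Fin (e+2) => wseg h (nzP h (e+2) θ') pf MS s' (i : ℕ)) x j
          = net h (e+2) (fun i : Fin (e+2) => wseg h (nzP h (e+2) θ') pf MS 1 (i : ℕ)) x j := by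
      intro s' x j
      exact (netG h (nzP h (e+2) θ') pf MS Wf hinv hpM hpW hdisjMW hpid hθ'W
        (hMSout 0 (by omega)) (hWout 0 (by omega)) s' (e+2) x).1 j
    -- NA5 : the c1bf ↔ θ' deformation
    have NA5 : ∀ (s' : ℝ) x j,
        net h (e+2) (fun i : Fin (e+2) => (fun m => fun (a : Fin (h (m+1))) (b : Fin (h m)) =>
            (1-s') * c1bf m a b + s' * nzP h (e+2) θ' m a b) (i : ℕ)) x j
          = net h (e+2) (fun i : Fin (e+2) => nzP h (e+2) θ' (i : ℕ)) x j := by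
      intro s' x j
      refine netA h (fun m => fun (a : Fin (h (m+1))) (b : Fin (h m)) =>
          (1-s') * c1bf m a b + s' * nzP h (e+2) θ' m a b) (nzP h (e+2) θ')
        (fun m => {j | j ∈ Wf m}) ?_ ?_ (e+2) x j ?_
      · intro m j' hj' k
        simp only [Set.mem_setOf_eq] at hj'
        have hq : qmap h pf MS (m+1) j' = j' := by
          by_cases hjM : j' ∈ MS (m+1)
          · simp [qmap, hjM]
          · simp [qmap, hjM, hpid (m+1) j' hjM hj']
        simp only [hc1bf, hq]
        ring
      · intro m j' hj' k hk
        simp only [Set.mem_setOf_eq] at hk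
        exact hθ'W m j' k hk
      · simp only [Set.mem_setOf_eq]
        rw [hWout (e+2) (by omega)]
        exact Finset.notMem_empty j
    -- netE : relocated θ' computes the same function
    have NEc1 : ∀ x j,
        net h (e+2) (fun i : Fin (e+2) => c1f (i : ℕ)) x j
          = net h (e+2) (fun i : Fin (e+2) => nzP h (e+2) θ' (i : ℕ)) x j := by
      intro x j
      have hE := netE h (nzP h (e+2) θ') pf hpbij hp0 (e+2) x j
      rw [hpd j] at hE
      simpa only [hc1f] using hE
    -- vertex-level network identities
    have hbr1 : (fun m => fun (a : Fin (h (m+1))) (b : Fin (h m)) =>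
        (1-(1:ℝ)) * nzP h (e+2) θ m a b + 1 * v1f m a b) = v1f := by
      funext m a b; ring
    have NETv1 : ∀ x, net h (e+2) (fun i : Fin (e+2) => v1f (i : ℕ)) x = net h (e+2) θ x := by
      intro x; funext j
      have h1 := NA1 1 x j
      rw [hbr1, nzP_eq h (e+2) θ] at h1
      exact h1
    have NETc1 : ∀ x, net h (e+2) (fun i : Fin (e+2) => c1f (i : ℕ)) x = net h (e+2) θ' x := by
      intro x; funext j
      have h1 := NEc1 x j
      rw [nzP_eq h (e+2) θ'] at h1
      exact h1
    have hbr2 : (fun m => fun (a : Fin (h (m+1))) (b : Fin (h m)) =>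
        (1-(0:ℝ)) * v2f m a b + 0 * c1f m a b) = v2f := by
      funext m a b; ring
    have NETv2 : ∀ x, net h (e+2) (fun i : Fin (e+2) => v2f (i : ℕ)) x = net h (e+2) θ' x := by
      intro x; funext j
      have h1 := NA2 0 x j
      rw [hbr2] at h1
      exact h1.trans (congrFun (NETc1 x) j)
    have hbr3 : (fun m => fun (a : Fin (h (m+1))) (b : Fin (h m)) =>
        (1-(1:ℝ)) * c1f m a b + 1 * c1af m a b) = c1af := by
      funext m a b; ring
    have NETc1a : ∀ x, net h (e+2) (fun i : Fin (e+2) => c1af (i : ℕ)) x = net h (e+2) θ' x := by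
      intro x; funext j
      have h1 := NA3 1 x j
      rw [hbr3] at h1
      exact h1.trans (congrFun (NETc1 x) j)
    have hws : ∀ (s' : ℝ), (fun m => fun (a : Fin (h (m+1))) (b : Fin (h m)) =>
        (1-s') * c1af m a b + s' * c1bf m a b) = wseg h (nzP h (e+2) θ') pf MS s' := by
      intro s'; funext m a b
      simp only [hc1af, hc1bf, wseg]
    have hws1 : wseg h (nzP h (e+2) θ') pf MS 1 = c1bf := by
      funext m a b; simp only [wseg, hc1bf]; ring
    have hws0 : wseg h (nzP h (e+2) θ') pf MS 0 = c1af := by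
      funext m a b; simp only [wseg, hc1af]; ring
    have NETc1b : ∀ x, net h (e+2) (fun i : Fin (e+2) => c1bf (i : ℕ)) x = net h (e+2) θ' x := by
      intro x; funext j
      have h1 := NA4 0 x j
      rw [hws0, hws1] at h1
      exact h1.symm.trans (congrFun (NETc1a x) j)
    -- the eight segment bounds
    have hMX := le_max_left (loss h (e+2) N l S θ) (loss h (e+2) N l S θ')
    have hMX' := le_max_right (loss h (e+2) N l S θ) (loss h (e+2) N l S θ')
    have seg0 : ∀ s : ℝ, loss h (e+2) N l S
        ((1-s) • θ + s • (fun i : Fin (e+2) => v1f (i : ℕ)))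
        ≤ max (loss h (e+2) N l S θ) (loss h (e+2) N l S θ') := by
      intro s
      have hpt : ((1-s) • θ + s • (fun i : Fin (e+2) => v1f (i : ℕ)))
          = (fun i : Fin (e+2) => (fun m => fun (a : Fin (h (m+1))) (b : Fin (h m)) =>
              (1-s) * nzP h (e+2) θ m a b + s * v1f m a b) (i : ℕ)) := by
        funext i a b
        have hi : (i : ℕ) < e+2 := i.isLt
        simp [Pi.add_apply, Pi.smul_apply, Matrix.add_apply, Matrix.smul_apply,
          smul_eq_mul, nzP, hi]
      rw [hpt]
      refine le_trans (le_of_eq (loss_congr h (e+2) N l S _ θ ?_)) hMX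
      intro x; funext j
      have h1 := NA1 s x j
      rw [nzP_eq h (e+2) θ] at h1
      exact h1
    have seg1 : ∀ s : ℝ, 0 ≤ s → s ≤ 1 → loss h (e+2) N l S
        ((1-s) • (fun i : Fin (e+2) => v1f (i : ℕ)) + s • (fun i : Fin (e+2) => v2f (i : ℕ)))
        ≤ max (loss h (e+2) N l S θ) (loss h (e+2) N l S θ') := by
      intro s hs0 hs1
      set mixv : NParams h := fun m => fun (a : Fin (h (m+1))) (b : Fin (h m)) =>
        (1-s) * v1f m a b + s * v2f m a b with hmixv
      have hpt : ((1-s) • (fun i : Fin (e+2) => v1f (i : ℕ)) + s • (fun i : Fin (e+2) => v2f (i : ℕ)))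
          = (fun i : Fin (e+2) => mixv (i : ℕ)) := by
        funext i a b
        simp [hmixv, Pi.add_apply, Pi.smul_apply, Matrix.add_apply, Matrix.smul_apply, smul_eq_mul]
      rw [hpt]
      refine loss_le_max_of_combo h (e+2) N l hl S θ θ' _ s hs0 hs1 ?_
      intro x
      have hhid : (fun i : Fin (e+1) => mixv (i : ℕ)) = (fun i : Fin (e+1) => v1f (i : ℕ)) := by
        funext i; funext a b
        have hne : ((i : ℕ)) + 1 ≠ e + 2 := by have := i.isLt; omega
        simp only [hmixv, hv1f, hv2f, if_neg hne]; ring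
      have hhid2 : (fun i : Fin (e+1) => v2f (i : ℕ)) = (fun i : Fin (e+1) => v1f (i : ℕ)) := by
        funext i; funext a b
        have hne : ((i : ℕ)) + 1 ≠ e + 2 := by have := i.isLt; omega
        simp only [hv1f, hv2f, if_neg hne]
      have htop12 : mixv (e+1) = (1-s) • v1f (e+1) + s • v2f (e+1) := by
        funext a b
        simp [hmixv, Matrix.add_apply, Matrix.smul_apply, smul_eq_mul]
      calc net h (e+2) (fun i : Fin (e+2) => mixv (i : ℕ)) x
          = (mixv (e+1)).mulVec
              (relu (net h (e+1) (fun i : Fin (e+1) => mixv (i : ℕ)) x)) := net_succ_succ h e mixv x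
        _ = ((1-s) • v1f (e+1) + s • v2f (e+1)).mulVec
              (relu (net h (e+1) (fun i : Fin (e+1) => v1f (i : ℕ)) x)) := by
            rw [htop12, hhid]
        _ = (1-s) • (v1f (e+1)).mulVec (relu (net h (e+1) (fun i : Fin (e+1) => v1f (i : ℕ)) x))
            + s • (v2f (e+1)).mulVec (relu (net h (e+1) (fun i : Fin (e+1) => v1f (i : ℕ)) x)) := by
            rw [Matrix.add_mulVec, Matrix.smul_mulVec, Matrix.smul_mulVec]
        _ = (1-s) • net h (e+2) (fun i : Fin (e+2) => v1f (i : ℕ)) x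
            + s • net h (e+2) (fun i : Fin (e+2) => v2f (i : ℕ)) x := by
            rw [net_succ_succ h e v1f x, net_succ_succ h e v2f x, hhid2]
        _ = (1-s) • net h (e+2) θ x + s • net h (e+2) θ' x := by
            rw [NETv1 x, NETv2 x]
    have seg2 : ∀ s : ℝ, loss h (e+2) N l S
        ((1-s) • (fun i : Fin (e+2) => v2f (i : ℕ)) + s • (fun i : Fin (e+2) => c1f (i : ℕ)))
        ≤ max (loss h (e+2) N l S θ) (loss h (e+2) N l S θ') := by
      intro s
      have hpt : ((1-s) • (fun i : Fin (e+2) => v2f (i : ℕ)) + s • (fun i : Fin (e+2) => c1f (i : ℕ)))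
          = (fun i : Fin (e+2) => (fun m => fun (a : Fin (h (m+1))) (b : Fin (h m)) =>
              (1-s) * v2f m a b + s * c1f m a b) (i : ℕ)) := by
        funext i a b
        simp [Pi.add_apply, Pi.smul_apply, Matrix.add_apply, Matrix.smul_apply, smul_eq_mul]
      rw [hpt]
      refine le_trans (le_of_eq (loss_congr h (e+2) N l S _ θ' ?_)) hMX'
      intro x; funext j
      exact (NA2 s x j).trans (congrFun (NETc1 x) j)
    have seg3 : ∀ s : ℝ, loss h (e+2) N l S
        ((1-s) • (fun i : Fin (e+2) => c1f (i : ℕ)) + s • (fun i : Fin (e+2) => c1af (i : ℕ)))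
        ≤ max (loss h (e+2) N l S θ) (loss h (e+2) N l S θ') := by
      intro s
      have hpt : ((1-s) • (fun i : Fin (e+2) => c1f (i : ℕ)) + s • (fun i : Fin (e+2) => c1af (i : ℕ)))
          = (fun i : Fin (e+2) => (fun m => fun (a : Fin (h (m+1))) (b : Fin (h m)) =>
              (1-s) * c1f m a b + s * c1af m a b) (i : ℕ)) := by
        funext i a b
        simp [Pi.add_apply, Pi.smul_apply, Matrix.add_apply, Matrix.smul_apply, smul_eq_mul]
      rw [hpt]
      refine le_trans (le_of_eq (loss_congr h (e+2) N l S _ θ' ?_)) hMX'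
      intro x; funext j
      exact (NA3 s x j).trans (congrFun (NETc1 x) j)
    have seg4 : ∀ s : ℝ, loss h (e+2) N l S
        ((1-s) • (fun i : Fin (e+2) => c1af (i : ℕ)) + s • (fun i : Fin (e+2) => c1bf (i : ℕ)))
        ≤ max (loss h (e+2) N l S θ) (loss h (e+2) N l S θ') := by
      intro s
      have hpt : ((1-s) • (fun i : Fin (e+2) => c1af (i : ℕ)) + s • (fun i : Fin (e+2) => c1bf (i : ℕ)))
          = (fun i : Fin (e+2) => wseg h (nzP h (e+2) θ') pf MS s (i : ℕ)) := by
        rw [← hws s]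
        funext i a b
        simp [Pi.add_apply, Pi.smul_apply, Matrix.add_apply, Matrix.smul_apply, smul_eq_mul]
      rw [hpt]
      refine le_trans (le_of_eq (loss_congr h (e+2) N l S _ θ' ?_)) hMX'
      intro x; funext j
      have h1 := NA4 s x j
      rw [hws1] at h1
      exact h1.trans (congrFun (NETc1b x) j)
    have seg5 : ∀ s : ℝ, loss h (e+2) N l S
        ((1-s) • (fun i : Fin (e+2) => c1bf (i : ℕ)) + s • θ')
        ≤ max (loss h (e+2) N l S θ) (loss h (e+2) N l S θ') := by
      intro s
      have hpt : ((1-s) • (fun i : Fin (e+2) => c1bf (i : ℕ)) + s • θ')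
          = (fun i : Fin (e+2) => (fun m => fun (a : Fin (h (m+1))) (b : Fin (h m)) =>
              (1-s) * c1bf m a b + s * nzP h (e+2) θ' m a b) (i : ℕ)) := by
        funext i a b
        have hi : (i : ℕ) < e+2 := i.isLt
        simp [Pi.add_apply, Pi.smul_apply, Matrix.add_apply, Matrix.smul_apply,
          smul_eq_mul, nzP, hi]
      rw [hpt]
      refine le_trans (le_of_eq (loss_congr h (e+2) N l S _ θ' ?_)) hMX'
      intro x; funext j
      have h1 := NA5 s x j
      rw [nzP_eq h (e+2) θ'] at h1
      exact h1
    have seg6 : ∀ s : ℝ, loss h (e+2) N l S ((1-s) • θ' + s • θ')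
        ≤ max (loss h (e+2) N l S θ) (loss h (e+2) N l S θ') := by
      intro s
      rw [combo_self]
      exact hMX'
    -- assemble the path
    refine ⟨![θ, (fun i : Fin (e+2) => v1f (i : ℕ)), (fun i : Fin (e+2) => v2f (i : ℕ)),
      (fun i : Fin (e+2) => c1f (i : ℕ)), (fun i : Fin (e+2) => c1af (i : ℕ)),
      (fun i : Fin (e+2) => c1bf (i : ℕ)), θ', θ', θ'], rfl, rfl, ?_⟩
    intro i s hs
    obtain ⟨hs0, hs1⟩ := hs
    fin_cases i
    · exact seg0 s
    · exact seg1 s hs0 hs1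
    · exact seg2 s
    · exact seg3 s
    · exact seg4 s
    · exact seg5 s
    · exact seg6 s
    · exact seg6 s
end
end

section
/- For the explicit dataset (X, y) with parameters h < k < l < m < n satisfying l − k > h, m − l > 2, n − m > h, letting f_j denote the j-th column of X, one has φ(f_1) − φ(f_2) = y and Σ_{j=3}^{h+2} φ(f_j) = y, where φ is the entrywise ReLU. Consequently, both a two-layer ReLU network with two active hidden units (with output weights +1 and −1) and a two-layer ReLU network with h active hidden units (with all output weights +1) exactly fit the labels y. -/
open scoped BigOperators

noncomputable section

/-- The explicit dataset matrix `X ∈ ℝ^{n×(h+2)}` (rows and columns indexed from 1 via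
`i' = i + 1`, `j' = j + 1`). -/
def Xmat (h k l m n : ℕ) : Matrix (Fin n) (Fin (h + 2)) ℝ :=
  fun i j =>
    let i' : ℕ := (i : ℕ) + 1
    let j' : ℕ := (j : ℕ) + 1
    if i' ≤ l then
      if j' = 1 then (i' : ℝ)
      else if j' = 2 then (i' : ℝ) - 1
      else if i' % h = j' % h then 1
      else if i' ≤ k then -1 else 0
    else if i' ≤ m then
      if j' ≤ 2 then (if i' % h = j' % h then -1 else 0) else 0
    else
      if j' ≤ 2 then 0 else (if i' % h = j' % h then -1 else 0)

/-- The label vector `y ∈ ℝⁿ`: `y_i = 1` for `i ≤ l` and `y_i = 0` otherwise. -/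
def yvec (l n : ℕ) : Fin n → ℝ := fun i => if (i : ℕ) + 1 ≤ l then 1 else 0

/-- A two-layer ReLU network with `H` hidden units on inputs in `ℝ^{h+2}`:
`f_{(w,A)}(x) = wᵀ φ(A x)`. -/
def net2 {H inp : ℕ} (w : Fin H → ℝ) (A : Matrix (Fin H) (Fin inp) ℝ)
    (x : Fin inp → ℝ) : ℝ :=
  ∑ r, w r * max (A.mulVec x r) 0

/-- In `{3, ..., h+2}` there is exactly one residue class mod `h` matching `t`. -/
lemma count_one (h : ℕ) (hh : 2 ≤ h) (t : ℕ) :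
    (∑ r : Fin h, (if t % h = ((r : ℕ) + 3) % h then (1 : ℝ) else 0)) = 1 := by
  have hpos : 0 < h := by omega
  have hlt : (t % h + 2 * h - 3) % h < h := Nat.mod_lt _ hpos
  set r₀ : Fin h := ⟨(t % h + 2 * h - 3) % h, hlt⟩ with hr₀
  have hkey : ((r₀ : ℕ) + 3) % h = t % h := by
    show ((t % h + 2 * h - 3) % h + 3) % h = t % h
    rw [Nat.mod_add_mod]
    have e : t % h + 2 * h - 3 + 3 = t % h + 2 * h := by omega
    rw [e, Nat.add_mul_mod_self_right, Nat.mod_mod_of_dvd _ dvd_rfl]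
  have huniq : ∀ r : Fin h, t % h = ((r : ℕ) + 3) % h → r = r₀ := by
    intro r hr
    have h1 : ((r : ℕ) + 3) % h = ((r₀ : ℕ) + 3) % h := by rw [← hr, hkey]
    have h2 : (r : ℕ) % h = (r₀ : ℕ) % h :=
      (Nat.ModEq.add_right_cancel' 3 h1)
    apply Fin.ext
    rwa [Nat.mod_eq_of_lt r.isLt, Nat.mod_eq_of_lt r₀.isLt] at h2
  rw [Fintype.sum_eq_single r₀ (fun r hr => if_neg (fun hc => hr (huniq r hc)))]
  rw [if_pos hkey.symm]

/-- The sum of the ReLUs of the last `h` columns equals the label vector. -/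
lemma core_sum (h k l m n : ℕ) (hh : 2 ≤ h) (i : Fin n) :
    ∑ r : Fin h, max (Xmat h k l m n i ⟨(r : ℕ) + 2, by omega⟩) 0 = yvec l n i := by
  by_cases hil : (i : ℕ) + 1 ≤ l
  · have key : ∀ r : Fin h, max (Xmat h k l m n i ⟨(r : ℕ) + 2, by omega⟩) 0
        = if ((i : ℕ) + 1) % h = ((r : ℕ) + 3) % h then (1 : ℝ) else 0 := by
      intro r
      simp only [Xmat, if_pos hil]
      rw [if_neg (by omega), if_neg (by omega)]
      have e : (r : ℕ) + 2 + 1 = (r : ℕ) + 3 := rfl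
      rw [e]
      split_ifs <;> norm_num
    rw [Finset.sum_congr rfl (fun r _ => key r), count_one h hh, yvec]
    rw [if_pos hil]
  · have key : ∀ r : Fin h, max (Xmat h k l m n i ⟨(r : ℕ) + 2, by omega⟩) 0 = 0 := by
      intro r
      simp only [Xmat, if_neg hil]
      by_cases him : (i : ℕ) + 1 ≤ m
      · rw [if_pos him, if_neg (by omega : ¬ (r : ℕ) + 2 + 1 ≤ 2)]; norm_num
      · rw [if_neg him, if_neg (by omega : ¬ (r : ℕ) + 2 + 1 ≤ 2)]
        split_ifs <;> norm_num
    rw [Finset.sum_congr rfl (fun r _ => key r), Finset.sum_const, smul_zero, yvec, if_neg hil]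

/-- The difference of the ReLUs of the first two columns equals the label vector. -/
lemma core_diff (h k l m n : ℕ) (hh : 2 ≤ h) (i : Fin n) :
    max (Xmat h k l m n i ⟨0, by omega⟩) 0 - max (Xmat h k l m n i ⟨1, by omega⟩) 0 =
      yvec l n i := by
  by_cases hil : (i : ℕ) + 1 ≤ l
  · simp only [Xmat, yvec, if_pos hil]
    have h0 : (0 : ℝ) ≤ ((i : ℕ) : ℝ) := Nat.cast_nonneg _
    norm_num
    rw [max_eq_left (by linarith)]; ring
  · simp only [Xmat, yvec, if_neg hil]
    split_ifs <;> norm_num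

lemma bridge (h : ℕ) (G : Fin (h + 2) → ℝ) :
    (∑ j : Fin (h + 2), if 2 ≤ (j : ℕ) then G j else 0)
      = ∑ r : Fin h, G ⟨(r : ℕ) + 2, by omega⟩ := by
  rw [Fin.sum_univ_succ, Fin.sum_univ_succ]
  simp only [Fin.val_zero, Fin.val_succ]
  norm_num
  apply Finset.sum_congr rfl
  intro r _
  congr 1

lemma pick {N : ℕ} (c : Fin N) (x : Fin N → ℝ) :
    (∑ j : Fin N, (if (j : ℕ) = (c : ℕ) then (1 : ℝ) else 0) * x j) = x c := by
  rw [Finset.sum_eq_single c]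
  · simp
  · intro j _ hj
    rw [if_neg (fun hc => hj (Fin.ext hc)), zero_mul]
  · simp

lemma twosum (h : ℕ) (hh : 2 ≤ h) (M : Fin h → ℝ) :
    (∑ r : Fin h, (if (r : ℕ) = 0 then (1 : ℝ) else if (r : ℕ) = 1 then -1 else 0) * M r)
      = M ⟨0, by omega⟩ - M ⟨1, by omega⟩ := by
  have e : ∀ r : Fin h,
      (if (r : ℕ) = 0 then (1 : ℝ) else if (r : ℕ) = 1 then -1 else 0) * M r
        = (if r = ⟨0, by omega⟩ then M ⟨0, by omega⟩ else 0)
          + (if r = ⟨1, by omega⟩ then -M ⟨1, by omega⟩ else 0) := by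
    intro r
    by_cases h0 : (r : ℕ) = 0
    · have hr : r = ⟨0, by omega⟩ := Fin.ext h0
      rw [hr]; simp [Fin.ext_iff]
    · by_cases h1 : (r : ℕ) = 1
      · have hr : r = ⟨1, by omega⟩ := Fin.ext h1
        rw [hr]; simp [Fin.ext_iff]
      · rw [if_neg h0, if_neg h1, zero_mul,
          if_neg (fun hc => h0 (by rw [hc])), if_neg (fun hc => h1 (by rw [hc]))]
        ring
  rw [Finset.sum_congr rfl (fun r _ => e r), Finset.sum_add_distrib,
    Finset.sum_ite_eq' Finset.univ, Finset.sum_ite_eq' Finset.univ]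
  simp
  ring

/-- **Lemma (two different exact fits of the dataset).**
For the explicit dataset `(X, y)`: `φ(f₁) − φ(f₂) = y` and `Σ_{j=3}^{h+2} φ(f_j) = y`
(where `f_j` is the `j`-th column of `X`).  Consequently, both a two-layer ReLU network with
two active hidden units (output weights `+1` and `−1`) and a two-layer ReLU network with `h`
active hidden units (all output weights `+1`) exactly fit the labels `y` on the rows of `X`. -/
theorem two_fits_exist
    (h k l m n : ℕ) (hh : 2 ≤ h) (hk : h < k) (hl : k < l) (hm : l < m) (hn : m < n)
    (hlk : h < l - k) (hml : 2 < m - l) (hnm : h < n - m) :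
    (∀ i : Fin n,
        max (Xmat h k l m n i ⟨0, by omega⟩) 0 - max (Xmat h k l m n i ⟨1, by omega⟩) 0 =
          yvec l n i) ∧
    (∀ i : Fin n,
        ∑ j : Fin (h + 2), (if 2 ≤ (j : ℕ) then max (Xmat h k l m n i j) 0 else 0) =
          yvec l n i) ∧
    (∃ (w : Fin h → ℝ) (A : Matrix (Fin h) (Fin (h + 2)) ℝ),
        w ⟨0, by omega⟩ = 1 ∧ w ⟨1, by omega⟩ = -1 ∧
        (∀ r : Fin h, 2 ≤ (r : ℕ) → w r = 0) ∧
        ∀ i : Fin n, net2 w A (fun j => Xmat h k l m n i j) = yvec l n i) ∧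
    (∃ (w : Fin h → ℝ) (A : Matrix (Fin h) (Fin (h + 2)) ℝ),
        (∀ r : Fin h, w r = 1) ∧
        ∀ i : Fin n, net2 w A (fun j => Xmat h k l m n i j) = yvec l n i) := by
  refine ⟨fun i => core_diff h k l m n hh i, ?_, ?_, ?_⟩
  · intro i
    rw [bridge h (fun j => max (Xmat h k l m n i j) 0)]
    exact core_sum h k l m n hh i
  · -- two-unit network
    have hw0 : ∀ r : Fin h, 2 ≤ (r : ℕ) →
        (if (r : ℕ) = 0 then (1 : ℝ) else if (r : ℕ) = 1 then -1 else 0) = 0 := by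
      intro r hr
      rw [if_neg (by omega), if_neg (by omega)]
    refine ⟨fun r => if (r : ℕ) = 0 then 1 else if (r : ℕ) = 1 then -1 else 0,
      fun r j => if (j : ℕ) = (r : ℕ) then 1 else 0, by norm_num, by norm_num,
      hw0, ?_⟩
    intro i
    have hmv : ∀ r : Fin h,
        (Matrix.mulVec ((fun r j => if (j : ℕ) = (r : ℕ) then (1 : ℝ) else 0) :
            Matrix (Fin h) (Fin (h + 2)) ℝ)
          (fun j => Xmat h k l m n i j)) r
          = Xmat h k l m n i ⟨(r : ℕ), by omega⟩ := by
      intro r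
      simp only [Matrix.mulVec, dotProduct]
      exact pick ⟨(r : ℕ), by omega⟩ _
    unfold net2
    rw [Finset.sum_congr rfl (fun r _ => by rw [hmv r])]
    rw [twosum h hh (fun r : Fin h => max (Xmat h k l m n i ⟨(r : ℕ), by omega⟩) 0)]
    exact core_diff h k l m n hh i
  · -- h-unit network
    refine ⟨fun _ => 1, fun r j => if (j : ℕ) = (r : ℕ) + 2 then 1 else 0,
      fun r => rfl, ?_⟩
    intro i
    have hmv : ∀ r : Fin h,
        (Matrix.mulVec ((fun r j => if (j : ℕ) = (r : ℕ) + 2 then (1 : ℝ) else 0) :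
            Matrix (Fin h) (Fin (h + 2)) ℝ)
          (fun j => Xmat h k l m n i j)) r
          = Xmat h k l m n i ⟨(r : ℕ) + 2, by omega⟩ := by
      intro r
      simp only [Matrix.mulVec, dotProduct]
      exact pick ⟨(r : ℕ) + 2, by omega⟩ _
    unfold net2
    rw [Finset.sum_congr rfl (fun r _ => by rw [hmv r, one_mul])]
    exact core_sum h k l m n hh i
end
end
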